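/- arXiv:2004.10192 — 8 statements merged into one kernel-verified Lean document; each statement's English description precedes it below -/
import Mathlib

section
/- For every integer n with 2 ≤ n ≤ 8, the complete coloring number of the n×n square grid graph equals 2n−1, i.e., Γ(G_n) = 2n−1. -/
/-- The rectangular grid graph `R_{m×n}`: vertices are pairs `(i,j)` with
`i < m`, `j < n`, adjacent iff they differ by exactly one in exactly one
coordinate. -/
def gridGraph (m n : ℕ) : SimpleGraph (Fin m × Fin n) where
  Adj p q := (p.1 = q.1 ∧ ((p.2 : ℕ) + 1 = q.2 ∨ (q.2 : ℕ) + 1 = p.2)) ∨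
             (p.2 = q.2 ∧ ((p.1 : ℕ) + 1 = q.1 ∨ (q.1 : ℕ) + 1 = p.1))
  symm := by
    constructor
    rintro p q (⟨h, h'⟩ | ⟨h, h'⟩)
    · exact Or.inl ⟨h.symm, h'.symm⟩
    · exact Or.inr ⟨h.symm, h'.symm⟩
  loopless := by
    constructor
    rintro p (⟨_, h | h⟩ | ⟨_, h | h⟩) <;> omega

/-- `c` is a `k`-complete coloring of `G`: every pair of distinct colors appears
on some edge. -/
def IsCompleteColoring {V : Type*} (G : SimpleGraph V) (k : ℕ) (c : V → Fin k) : Prop :=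
  ∀ i j : Fin k, i ≠ j → ∃ u v, G.Adj u v ∧ c u = i ∧ c v = j

/-- `c` is a `k`-complete proper coloring of `G`. -/
def IsCompleteProperColoring {V : Type*} (G : SimpleGraph V) (k : ℕ) (c : V → Fin k) : Prop :=
  IsCompleteColoring G k c ∧ ∀ u v, G.Adj u v → c u ≠ c v

/-- The complete coloring number `Γ(G)`: the maximum `k` admitting a
`k`-complete coloring. -/
noncomputable def completeColoringNumber {V : Type*} (G : SimpleGraph V) : ℕ :=
  sSup {k | ∃ c : V → Fin k, IsCompleteColoring G k c}

/-- The achromatic number `Ψ(G)`: the maximum `k` admitting a `k`-complete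
proper coloring. -/
noncomputable def achromaticNumber {V : Type*} (G : SimpleGraph V) : ℕ :=
  sSup {k | ∃ c : V → Fin k, IsCompleteProperColoring G k c}

instance (m n : ℕ) : DecidableRel (gridGraph m n).Adj := fun p q =>
  decidable_of_iff ((p.1 = q.1 ∧ ((p.2 : ℕ) + 1 = q.2 ∨ (q.2 : ℕ) + 1 = p.2)) ∨
             (p.2 = q.2 ∧ ((p.1 : ℕ) + 1 = q.1 ∨ (q.1 : ℕ) + 1 = p.1))) Iff.rfl

lemma isCompleteColoring_of_witness {V : Type*} {G : SimpleGraph V} {k : ℕ} {c : V → Fin k}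
    (w : Fin k → Fin k → V × V)
    (h : ∀ i j : Fin k, i ≠ j → G.Adj (w i j).1 (w i j).2 ∧ c (w i j).1 = i ∧ c (w i j).2 = j) :
    IsCompleteColoring G k c := fun i j hij =>
  ⟨(w i j).1, (w i j).2, (h i j hij).1, (h i j hij).2.1, (h i j hij).2.2⟩

lemma count_le {V : Type*} [Fintype V] (G : SimpleGraph V) [DecidableRel G.Adj]
    {k : ℕ} {c : V → Fin k} (h : IsCompleteColoring G k c) :
    k * k ≤ Fintype.card {q : V × V // G.Adj q.1 q.2} + k := by
  classical
  have hw : ∀ p : {p : Fin k × Fin k // p.1 ≠ p.2},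
      ∃ q : V × V, G.Adj q.1 q.2 ∧ c q.1 = p.1.1 ∧ c q.2 = p.1.2 := by
    rintro ⟨⟨i, j⟩, hij⟩
    obtain ⟨u, v, huv, hu, hv⟩ := h i j hij
    exact ⟨(u, v), huv, hu, hv⟩
  choose f hf1 hf2 hf3 using hw
  have key : Fintype.card {p : Fin k × Fin k // p.1 ≠ p.2}
      ≤ Fintype.card {q : V × V // G.Adj q.1 q.2} := by
    apply Fintype.card_le_of_injective (fun p => ⟨f p, hf1 p⟩)
    intro p q hpq
    have hfe : f p = f q := congrArg Subtype.val hpq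
    have e1 : p.1.1 = q.1.1 := by rw [← hf2 p, ← hf2 q, hfe]
    have e2 : p.1.2 = q.1.2 := by rw [← hf3 p, ← hf3 q, hfe]
    exact Subtype.ext (Prod.ext e1 e2)
  have hc : Fintype.card {p : Fin k × Fin k // p.1 ≠ p.2} = k * k - k := by
    rw [Fintype.card_subtype]
    have he : (Finset.univ.filter fun p : Fin k × Fin k => p.1 ≠ p.2)
        = (Finset.univ : Finset (Fin k)).offDiag := by
      ext p; simp [Finset.mem_offDiag]
    rw [he, Finset.offDiag_card]
    simp
  rw [hc] at key
  omega

lemma key_ineq (n k : ℕ) (h2 : 2 ≤ n) (h : k * k ≤ 4 * n * (n - 1) + k) : k ≤ 2 * n - 1 := by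
  obtain ⟨m, rfl⟩ : ∃ m, n = m + 2 := ⟨n - 2, by omega⟩
  by_contra hc
  push_neg at hc
  have h1 : 2 * m + 4 ≤ k := by omega
  have h3 : (m + 2) - 1 = m + 1 := by omega
  rw [h3] at h
  nlinarith [Nat.mul_le_mul h1 h1, Nat.mul_le_mul_left k h1]

lemma gamma_eq (n : ℕ) (h2 : 2 ≤ n)
    (hcard : Fintype.card {q : (Fin n × Fin n) × (Fin n × Fin n) //
      (gridGraph n n).Adj q.1 q.2} = 4 * n * (n - 1))
    (hex : ∃ c : Fin n × Fin n → Fin (2 * n - 1),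
      IsCompleteColoring (gridGraph n n) (2 * n - 1) c) :
    completeColoringNumber (gridGraph n n) = 2 * n - 1 := by
  have hbdd : ∀ k ∈ {k | ∃ c : Fin n × Fin n → Fin k, IsCompleteColoring (gridGraph n n) k c},
      k ≤ 2 * n - 1 := by
    rintro k ⟨c, hc⟩
    have := count_le (gridGraph n n) hc
    rw [hcard] at this
    exact key_ineq n k h2 this
  apply le_antisymm
  · exact csSup_le ⟨2 * n - 1, hex⟩ hbdd
  · exact le_csSup ⟨2 * n - 1, hbdd⟩ hex

def col2 : Fin 2 × Fin 2 → Fin 3 := fun p => !![2,2;0,1] p.1 p.2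

def wit2 : Fin 3 → Fin 3 → ((Fin 2 × Fin 2) × (Fin 2 × Fin 2)) := fun i j =>
  !![((0,0),(0,1)),((1,0),(1,1)),((1,0),(0,0));
    ((1,1),(1,0)),((0,0),(0,1)),((1,1),(0,1));
    ((0,0),(1,0)),((0,1),(1,1)),((0,0),(0,1))] i j

set_option maxRecDepth 100000 in
lemma complete2 : IsCompleteColoring (gridGraph 2 2) 3 col2 :=
  isCompleteColoring_of_witness wit2 (by decide)


def col3 : Fin 3 × Fin 3 → Fin 5 := fun p => !![3,2,1;4,0,3;2,1,4] p.1 p.2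

def wit3 : Fin 5 → Fin 5 → ((Fin 3 × Fin 3) × (Fin 3 × Fin 3)) := fun i j =>
  !![((0,0),(0,1)),((1,1),(2,1)),((1,1),(0,1)),((1,1),(1,2)),((1,1),(1,0));
    ((2,1),(1,1)),((0,0),(0,1)),((2,1),(2,0)),((0,2),(1,2)),((2,1),(2,2));
    ((0,1),(1,1)),((2,0),(2,1)),((0,0),(0,1)),((0,1),(0,0)),((2,0),(1,0));
    ((1,2),(1,1)),((1,2),(0,2)),((0,0),(0,1)),((0,0),(0,1)),((1,2),(2,2));
    ((1,0),(1,1)),((2,2),(2,1)),((1,0),(2,0)),((2,2),(1,2)),((0,0),(0,1))] i j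

set_option maxRecDepth 100000 in
lemma complete3 : IsCompleteColoring (gridGraph 3 3) 5 col3 :=
  isCompleteColoring_of_witness wit3 (by decide)


def col4 : Fin 4 × Fin 4 → Fin 7 := fun p => !![3,2,1,5;6,4,3,0;2,0,6,1;5,3,5,4] p.1 p.2

def wit4 : Fin 7 → Fin 7 → ((Fin 4 × Fin 4) × (Fin 4 × Fin 4)) := fun i j =>
  !![((0,0),(0,1)),((1,3),(2,3)),((2,1),(2,0)),((2,1),(3,1)),((2,1),(1,1)),((1,3),(0,3)),((2,1),(2,2));
    ((2,3),(1,3)),((0,0),(0,1)),((0,2),(0,1)),((0,2),(1,2)),((2,3),(3,3)),((0,2),(0,3)),((2,3),(2,2));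
    ((2,0),(2,1)),((0,1),(0,2)),((0,0),(0,1)),((0,1),(0,0)),((0,1),(1,1)),((2,0),(3,0)),((2,0),(1,0));
    ((3,1),(2,1)),((1,2),(0,2)),((0,0),(0,1)),((0,0),(0,1)),((1,2),(1,1)),((3,1),(3,2)),((1,2),(2,2));
    ((1,1),(2,1)),((3,3),(2,3)),((1,1),(0,1)),((1,1),(1,2)),((0,0),(0,1)),((3,3),(3,2)),((1,1),(1,0));
    ((0,3),(1,3)),((0,3),(0,2)),((3,0),(2,0)),((3,2),(3,1)),((3,2),(3,3)),((0,0),(0,1)),((3,2),(2,2));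
    ((2,2),(2,1)),((2,2),(2,3)),((1,0),(2,0)),((2,2),(1,2)),((1,0),(1,1)),((2,2),(3,2)),((0,0),(0,1))] i j

set_option maxRecDepth 100000 in
lemma complete4 : IsCompleteColoring (gridGraph 4 4) 7 col4 :=
  isCompleteColoring_of_witness wit4 (by decide)


def col5 : Fin 5 × Fin 5 → Fin 9 := fun p => !![6,7,5,6,0;1,8,4,3,7;4,6,0,8,2;1,2,3,5,2;5,0,1,7,4] p.1 p.2

def wit5 : Fin 9 → Fin 9 → ((Fin 5 × Fin 5) × (Fin 5 × Fin 5)) := fun i j =>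
  !![((0,0),(0,1)),((4,1),(4,2)),((4,1),(3,1)),((2,2),(3,2)),((2,2),(1,2)),((4,1),(4,0)),((2,2),(2,1)),((0,4),(1,4)),((2,2),(2,3));
    ((4,2),(4,1)),((0,0),(0,1)),((3,0),(3,1)),((4,2),(3,2)),((3,0),(2,0)),((3,0),(4,0)),((1,0),(0,0)),((4,2),(4,3)),((1,0),(1,1));
    ((3,1),(4,1)),((3,1),(3,0)),((0,0),(0,1)),((3,1),(3,2)),((3,4),(4,4)),((3,4),(3,3)),((3,1),(2,1)),((2,4),(1,4)),((2,4),(2,3));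
    ((3,2),(2,2)),((3,2),(4,2)),((3,2),(3,1)),((0,0),(0,1)),((1,3),(1,2)),((3,2),(3,3)),((1,3),(0,3)),((1,3),(1,4)),((1,3),(2,3));
    ((1,2),(2,2)),((2,0),(3,0)),((4,4),(3,4)),((1,2),(1,3)),((0,0),(0,1)),((1,2),(0,2)),((2,0),(2,1)),((4,4),(4,3)),((1,2),(1,1));
    ((4,0),(4,1)),((4,0),(3,0)),((3,3),(3,4)),((3,3),(3,2)),((0,2),(1,2)),((0,0),(0,1)),((0,2),(0,3)),((3,3),(4,3)),((3,3),(2,3));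
    ((2,1),(2,2)),((0,0),(1,0)),((2,1),(3,1)),((0,3),(1,3)),((2,1),(2,0)),((0,3),(0,2)),((0,0),(0,1)),((0,0),(0,1)),((2,1),(1,1));
    ((1,4),(0,4)),((4,3),(4,2)),((1,4),(2,4)),((1,4),(1,3)),((4,3),(4,4)),((4,3),(3,3)),((0,1),(0,0)),((0,0),(0,1)),((0,1),(1,1));
    ((2,3),(2,2)),((1,1),(1,0)),((2,3),(2,4)),((2,3),(1,3)),((1,1),(1,2)),((2,3),(3,3)),((1,1),(2,1)),((1,1),(0,1)),((0,0),(0,1))] i j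

set_option maxRecDepth 100000 in
lemma complete5 : IsCompleteColoring (gridGraph 5 5) 9 col5 :=
  isCompleteColoring_of_witness wit5 (by decide)


def col6 : Fin 6 × Fin 6 → Fin 11 := fun p => !![0,9,5,4,8,10;2,8,0,4,6,5;6,7,10,3,0,7;10,2,9,6,1,4;10,1,7,5,3,2;4,9,3,8,1,5] p.1 p.2

def wit6 : Fin 11 → Fin 11 → ((Fin 6 × Fin 6) × (Fin 6 × Fin 6)) := fun i j =>
  !![((0,0),(0,1)),((2,4),(3,4)),((0,0),(1,0)),((2,4),(2,3)),((1,2),(1,3)),((1,2),(0,2)),((2,4),(1,4)),((2,4),(2,5)),((1,2),(1,1)),((0,0),(0,1)),((1,2),(2,2));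
    ((3,4),(2,4)),((0,0),(0,1)),((4,1),(3,1)),((5,4),(4,4)),((3,4),(3,5)),((5,4),(5,5)),((3,4),(3,3)),((4,1),(4,2)),((5,4),(5,3)),((4,1),(5,1)),((4,1),(4,0));
    ((1,0),(0,0)),((3,1),(4,1)),((0,0),(0,1)),((4,5),(4,4)),((4,5),(3,5)),((4,5),(5,5)),((1,0),(2,0)),((3,1),(2,1)),((1,0),(1,1)),((3,1),(3,2)),((3,1),(3,0));
    ((2,3),(2,4)),((4,4),(5,4)),((4,4),(4,5)),((0,0),(0,1)),((2,3),(1,3)),((4,4),(4,3)),((2,3),(3,3)),((5,2),(4,2)),((5,2),(5,3)),((5,2),(5,1)),((2,3),(2,2));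
    ((1,3),(1,2)),((3,5),(3,4)),((3,5),(4,5)),((1,3),(2,3)),((0,0),(0,1)),((0,3),(0,2)),((1,3),(1,4)),((3,5),(2,5)),((0,3),(0,4)),((5,0),(5,1)),((5,0),(4,0));
    ((0,2),(1,2)),((5,5),(5,4)),((5,5),(4,5)),((4,3),(4,4)),((0,2),(0,3)),((0,0),(0,1)),((4,3),(3,3)),((4,3),(4,2)),((4,3),(5,3)),((0,2),(0,1)),((1,5),(0,5));
    ((1,4),(2,4)),((3,3),(3,4)),((2,0),(1,0)),((3,3),(2,3)),((1,4),(1,3)),((3,3),(4,3)),((0,0),(0,1)),((2,0),(2,1)),((1,4),(0,4)),((3,3),(3,2)),((2,0),(3,0));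
    ((2,5),(2,4)),((4,2),(4,1)),((2,1),(3,1)),((4,2),(5,2)),((2,5),(3,5)),((4,2),(4,3)),((2,1),(2,0)),((0,0),(0,1)),((2,1),(1,1)),((4,2),(3,2)),((2,1),(2,2));
    ((1,1),(1,2)),((5,3),(5,4)),((1,1),(1,0)),((5,3),(5,2)),((0,4),(0,3)),((5,3),(4,3)),((0,4),(1,4)),((1,1),(2,1)),((0,0),(0,1)),((1,1),(0,1)),((0,4),(0,5));
    ((0,1),(0,0)),((5,1),(4,1)),((3,2),(3,1)),((5,1),(5,2)),((5,1),(5,0)),((0,1),(0,2)),((3,2),(3,3)),((3,2),(4,2)),((0,1),(1,1)),((0,0),(0,1)),((3,2),(2,2));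
    ((2,2),(1,2)),((4,0),(4,1)),((3,0),(3,1)),((2,2),(2,3)),((4,0),(5,0)),((0,5),(1,5)),((3,0),(2,0)),((2,2),(2,1)),((0,5),(0,4)),((2,2),(3,2)),((0,0),(0,1))] i j

set_option maxRecDepth 100000 in
lemma complete6 : IsCompleteColoring (gridGraph 6 6) 11 col6 :=
  isCompleteColoring_of_witness wit6 (by decide)


def col7 : Fin 7 × Fin 7 → Fin 13 := fun p => !![8,10,11,1,12,8,6;11,3,2,0,6,2,5;4,9,12,4,6,9,7;11,5,0,8,7,0,10;7,12,11,9,1,3,5;4,3,6,10,2,7,1;5,8,1,4,4,12,10] p.1 p.2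

def wit7 : Fin 13 → Fin 13 → ((Fin 7 × Fin 7) × (Fin 7 × Fin 7)) := fun i j =>
  !![((0,0),(0,1)),((1,3),(0,3)),((1,3),(1,2)),((3,5),(4,5)),((1,3),(2,3)),((3,2),(3,1)),((1,3),(1,4)),((3,5),(3,4)),((3,2),(3,3)),((3,5),(2,5)),((3,5),(3,6)),((3,2),(4,2)),((3,2),(2,2));
    ((0,3),(1,3)),((0,0),(0,1)),((4,4),(5,4)),((4,4),(4,5)),((6,2),(6,3)),((5,6),(4,6)),((6,2),(5,2)),((5,6),(5,5)),((6,2),(6,1)),((4,4),(4,3)),((5,6),(6,6)),((0,3),(0,2)),((0,3),(0,4));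
    ((1,2),(1,3)),((5,4),(4,4)),((0,0),(0,1)),((1,2),(1,1)),((5,4),(6,4)),((1,5),(1,6)),((1,5),(1,4)),((5,4),(5,5)),((1,5),(0,5)),((1,5),(2,5)),((5,4),(5,3)),((1,2),(0,2)),((1,2),(2,2));
    ((4,5),(3,5)),((4,5),(4,4)),((1,1),(1,2)),((0,0),(0,1)),((5,1),(5,0)),((4,5),(4,6)),((5,1),(5,2)),((4,5),(5,5)),((5,1),(6,1)),((1,1),(2,1)),((1,1),(0,1)),((1,1),(1,0)),((5,1),(4,1));
    ((2,3),(1,3)),((6,3),(6,2)),((6,4),(5,4)),((5,0),(5,1)),((0,0),(0,1)),((5,0),(6,0)),((2,3),(2,4)),((5,0),(4,0)),((2,3),(3,3)),((2,0),(2,1)),((6,3),(5,3)),((2,0),(3,0)),((6,4),(6,5));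
    ((3,1),(3,2)),((4,6),(5,6)),((1,6),(1,5)),((4,6),(4,5)),((6,0),(5,0)),((0,0),(0,1)),((1,6),(0,6)),((1,6),(2,6)),((6,0),(6,1)),((3,1),(2,1)),((4,6),(3,6)),((3,1),(3,0)),((3,1),(4,1));
    ((1,4),(1,3)),((5,2),(6,2)),((1,4),(1,5)),((5,2),(5,1)),((2,4),(2,3)),((0,6),(1,6)),((0,0),(0,1)),((2,4),(3,4)),((0,6),(0,5)),((2,4),(2,5)),((5,2),(5,3)),((5,2),(4,2)),((1,4),(0,4));
    ((3,4),(3,5)),((5,5),(5,6)),((5,5),(5,4)),((5,5),(4,5)),((4,0),(5,0)),((2,6),(1,6)),((3,4),(2,4)),((0,0),(0,1)),((3,4),(3,3)),((2,6),(2,5)),((2,6),(3,6)),((4,0),(3,0)),((5,5),(6,5));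
    ((3,3),(3,2)),((6,1),(6,2)),((0,5),(1,5)),((6,1),(5,1)),((3,3),(2,3)),((6,1),(6,0)),((0,5),(0,6)),((3,3),(3,4)),((0,0),(0,1)),((3,3),(4,3)),((0,0),(0,1)),((0,0),(1,0)),((0,5),(0,4));
    ((2,5),(3,5)),((4,3),(4,4)),((2,5),(1,5)),((2,1),(1,1)),((2,1),(2,0)),((2,1),(3,1)),((2,5),(2,4)),((2,5),(2,6)),((4,3),(3,3)),((0,0),(0,1)),((4,3),(5,3)),((4,3),(4,2)),((2,1),(2,2));
    ((3,6),(3,5)),((6,6),(5,6)),((5,3),(5,4)),((0,1),(1,1)),((5,3),(6,3)),((3,6),(4,6)),((5,3),(5,2)),((3,6),(2,6)),((0,1),(0,0)),((5,3),(4,3)),((0,0),(0,1)),((0,1),(0,2)),((6,6),(6,5));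
    ((4,2),(3,2)),((0,2),(0,3)),((0,2),(1,2)),((1,0),(1,1)),((3,0),(2,0)),((3,0),(3,1)),((4,2),(5,2)),((3,0),(4,0)),((1,0),(0,0)),((4,2),(4,3)),((0,2),(0,1)),((0,0),(0,1)),((4,2),(4,1));
    ((2,2),(3,2)),((0,4),(0,3)),((2,2),(1,2)),((4,1),(5,1)),((6,5),(6,4)),((4,1),(3,1)),((0,4),(1,4)),((6,5),(5,5)),((0,4),(0,5)),((2,2),(2,1)),((6,5),(6,6)),((4,1),(4,2)),((0,0),(0,1))] i j

set_option maxRecDepth 100000 in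
lemma complete7 : IsCompleteColoring (gridGraph 7 7) 13 col7 :=
  isCompleteColoring_of_witness wit7 (by decide)


def col8 : Fin 8 × Fin 8 → Fin 15 := fun p => !![1,6,7,11,1,10,2,4;5,11,14,13,7,0,9,12;4,12,6,5,2,11,10,1;14,10,3,7,8,4,6,9;8,5,0,4,3,1,8,11;1,14,2,6,13,4,9,3;2,3,13,0,8,10,7,12;12,5,9,14,12,13,1,0] p.1 p.2

def wit8 : Fin 15 → Fin 15 → ((Fin 8 × Fin 8) × (Fin 8 × Fin 8)) := fun i j =>
  !![((0,0),(0,1)),((7,7),(7,6)),((4,2),(5,2)),((4,2),(3,2)),((4,2),(4,3)),((4,2),(4,1)),((6,3),(5,3)),((1,5),(1,4)),((6,3),(6,4)),((1,5),(1,6)),((1,5),(0,5)),((1,5),(2,5)),((7,7),(6,7)),((6,3),(6,2)),((6,3),(7,3));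
    ((7,6),(7,7)),((0,0),(0,1)),((5,0),(6,0)),((4,5),(4,4)),((4,5),(5,5)),((0,0),(1,0)),((0,0),(0,1)),((7,6),(6,6)),((4,5),(4,6)),((2,7),(3,7)),((2,7),(2,6)),((0,4),(0,3)),((2,7),(1,7)),((7,6),(7,5)),((5,0),(5,1));
    ((5,2),(4,2)),((6,0),(5,0)),((0,0),(0,1)),((6,0),(6,1)),((0,6),(0,7)),((2,4),(2,3)),((5,2),(5,3)),((2,4),(1,4)),((2,4),(3,4)),((0,6),(1,6)),((0,6),(0,5)),((2,4),(2,5)),((6,0),(7,0)),((5,2),(6,2)),((5,2),(5,1));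
    ((3,2),(4,2)),((4,4),(4,5)),((6,1),(6,0)),((0,0),(0,1)),((4,4),(4,3)),((6,1),(7,1)),((3,2),(2,2)),((3,2),(3,3)),((4,4),(3,4)),((5,7),(5,6)),((3,2),(3,1)),((5,7),(4,7)),((5,7),(6,7)),((6,1),(6,2)),((6,1),(5,1));
    ((4,3),(4,2)),((5,5),(4,5)),((0,7),(0,6)),((4,3),(4,4)),((0,0),(0,1)),((2,0),(1,0)),((4,3),(5,3)),((4,3),(3,3)),((3,5),(3,4)),((5,5),(5,6)),((5,5),(6,5)),((3,5),(2,5)),((2,0),(2,1)),((5,5),(5,4)),((2,0),(3,0));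
    ((4,1),(4,2)),((1,0),(0,0)),((2,3),(2,4)),((7,1),(6,1)),((1,0),(2,0)),((0,0),(0,1)),((2,3),(2,2)),((2,3),(3,3)),((4,1),(4,0)),((7,1),(7,2)),((4,1),(3,1)),((1,0),(1,1)),((7,1),(7,0)),((2,3),(1,3)),((4,1),(5,1));
    ((5,3),(6,3)),((0,1),(0,0)),((5,3),(5,2)),((2,2),(3,2)),((5,3),(4,3)),((2,2),(2,3)),((0,0),(0,1)),((0,1),(0,2)),((3,6),(4,6)),((3,6),(3,7)),((3,6),(2,6)),((0,1),(1,1)),((2,2),(2,1)),((5,3),(5,4)),((2,2),(1,2));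
    ((1,4),(1,5)),((6,6),(7,6)),((1,4),(2,4)),((3,3),(3,2)),((3,3),(4,3)),((3,3),(2,3)),((0,2),(0,1)),((0,0),(0,1)),((3,3),(3,4)),((6,6),(5,6)),((6,6),(6,5)),((0,2),(0,3)),((6,6),(6,7)),((1,4),(1,3)),((0,2),(1,2));
    ((6,4),(6,3)),((4,6),(4,5)),((3,4),(2,4)),((3,4),(4,4)),((3,4),(3,5)),((4,0),(4,1)),((4,6),(3,6)),((3,4),(3,3)),((0,0),(0,1)),((4,6),(5,6)),((6,4),(6,5)),((4,6),(4,7)),((6,4),(7,4)),((6,4),(5,4)),((4,0),(3,0));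
    ((1,6),(1,5)),((3,7),(2,7)),((1,6),(0,6)),((5,6),(5,7)),((5,6),(5,5)),((7,2),(7,1)),((3,7),(3,6)),((5,6),(6,6)),((5,6),(4,6)),((0,0),(0,1)),((1,6),(2,6)),((3,7),(4,7)),((1,6),(1,7)),((7,2),(6,2)),((7,2),(7,3));
    ((0,5),(1,5)),((2,6),(2,7)),((0,5),(0,6)),((3,1),(3,2)),((6,5),(5,5)),((3,1),(4,1)),((2,6),(3,6)),((6,5),(6,6)),((6,5),(6,4)),((2,6),(1,6)),((0,0),(0,1)),((2,6),(2,5)),((3,1),(2,1)),((6,5),(7,5)),((3,1),(3,0));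
    ((2,5),(1,5)),((0,3),(0,4)),((2,5),(2,4)),((4,7),(5,7)),((2,5),(3,5)),((1,1),(1,0)),((1,1),(0,1)),((0,3),(0,2)),((4,7),(4,6)),((4,7),(3,7)),((2,5),(2,6)),((0,0),(0,1)),((1,1),(2,1)),((0,3),(1,3)),((1,1),(1,2));
    ((6,7),(7,7)),((1,7),(2,7)),((7,0),(6,0)),((6,7),(5,7)),((2,1),(2,0)),((7,0),(7,1)),((2,1),(2,2)),((6,7),(6,6)),((7,4),(6,4)),((1,7),(1,6)),((2,1),(3,1)),((2,1),(1,1)),((0,0),(0,1)),((7,4),(7,5)),((7,4),(7,3));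
    ((6,2),(6,3)),((7,5),(7,6)),((6,2),(5,2)),((6,2),(6,1)),((5,4),(5,5)),((1,3),(2,3)),((5,4),(5,3)),((1,3),(1,4)),((5,4),(6,4)),((6,2),(7,2)),((7,5),(6,5)),((1,3),(0,3)),((7,5),(7,4)),((0,0),(0,1)),((1,3),(1,2));
    ((7,3),(6,3)),((5,1),(5,0)),((5,1),(5,2)),((5,1),(6,1)),((3,0),(2,0)),((5,1),(4,1)),((1,2),(2,2)),((1,2),(0,2)),((3,0),(4,0)),((7,3),(7,2)),((3,0),(3,1)),((1,2),(1,1)),((7,3),(7,4)),((1,2),(1,3)),((0,0),(0,1))] i j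

set_option maxRecDepth 100000 in
lemma complete8 : IsCompleteColoring (gridGraph 8 8) 15 col8 :=
  isCompleteColoring_of_witness wit8 (by decide)


set_option maxRecDepth 100000 in
lemma card2 : Fintype.card {q : (Fin 2 × Fin 2) × (Fin 2 × Fin 2) //
    (gridGraph 2 2).Adj q.1 q.2} = 4 * 2 * (2 - 1) := by decide

set_option maxRecDepth 100000 in
lemma card3 : Fintype.card {q : (Fin 3 × Fin 3) × (Fin 3 × Fin 3) //
    (gridGraph 3 3).Adj q.1 q.2} = 4 * 3 * (3 - 1) := by decide

set_option maxRecDepth 100000 in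
lemma card4 : Fintype.card {q : (Fin 4 × Fin 4) × (Fin 4 × Fin 4) //
    (gridGraph 4 4).Adj q.1 q.2} = 4 * 4 * (4 - 1) := by decide

set_option maxRecDepth 100000 in
lemma card5 : Fintype.card {q : (Fin 5 × Fin 5) × (Fin 5 × Fin 5) //
    (gridGraph 5 5).Adj q.1 q.2} = 4 * 5 * (5 - 1) := by decide

set_option maxRecDepth 100000 in
lemma card6 : Fintype.card {q : (Fin 6 × Fin 6) × (Fin 6 × Fin 6) //
    (gridGraph 6 6).Adj q.1 q.2} = 4 * 6 * (6 - 1) := by decide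

set_option maxRecDepth 100000 in
lemma card7 : Fintype.card {q : (Fin 7 × Fin 7) × (Fin 7 × Fin 7) //
    (gridGraph 7 7).Adj q.1 q.2} = 4 * 7 * (7 - 1) := by decide

set_option maxRecDepth 100000 in
lemma card8 : Fintype.card {q : (Fin 8 × Fin 8) × (Fin 8 × Fin 8) //
    (gridGraph 8 8).Adj q.1 q.2} = 4 * 8 * (8 - 1) := by decide

/-- For every integer `n` with `2 ≤ n ≤ 8`, the complete coloring number of the
`n×n` square grid graph equals `2n − 1`. -/
theorem gamma_grid_small (n : ℕ) (h2 : 2 ≤ n) (h8 : n ≤ 8) :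
    completeColoringNumber (gridGraph n n) = 2 * n - 1 := by
  interval_cases n
  · exact gamma_eq 2 (by norm_num) card2 ⟨col2, complete2⟩
  · exact gamma_eq 3 (by norm_num) card3 ⟨col3, complete3⟩
  · exact gamma_eq 4 (by norm_num) card4 ⟨col4, complete4⟩
  · exact gamma_eq 5 (by norm_num) card5 ⟨col5, complete5⟩
  · exact gamma_eq 6 (by norm_num) card6 ⟨col6, complete6⟩
  · exact gamma_eq 7 (by norm_num) card7 ⟨col7, complete7⟩
  · exact gamma_eq 8 (by norm_num) card8 ⟨col8, complete8⟩
end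

section
/- For every integer n ≥ 2, let q be the maximal integer such that q(q−1)/2 ≤ n and q·⌈(q−1)/2⌉ ≤ n+1. Then the achromatic number of the path with n edges equals q: Ψ(P_n) = q. -/
/-- The `n`-path `P_n`: vertices `{0, 1, …, n}`, adjacent iff they differ by 1. -/
def pathGraph (n : ℕ) : SimpleGraph (Fin (n + 1)) where
  Adj u v := (u : ℕ) + 1 = v ∨ (v : ℕ) + 1 = u
  symm := ⟨by rintro u v (h | h) <;> [exact Or.inr h; exact Or.inl h]⟩
  loopless := ⟨by rintro u (h | h) <;> omega⟩

/-- `i` and `j` occur consecutively (in some order) in `l`. -/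
def Adjl (l : List ℕ) (i j : ℕ) : Prop := [i, j] <:+: l ∨ [j, i] <:+: l

/-- A good list: a complete proper coloring of a path, written as a list of colors. -/
def Good (q : ℕ) (l : List ℕ) : Prop :=
  (∀ x ∈ l, x < q) ∧ l.Chain' (· ≠ ·) ∧
    ∀ i j, i < q → j < q → i ≠ j → Adjl l i j

lemma Adjl.mono {l l' : List ℕ} {i j : ℕ} (h : Adjl l i j) (hl : l <:+: l') : Adjl l' i j := by
  rcases h with h | h
  · exact Or.inl (h.trans hl)
  · exact Or.inr (h.trans hl)

lemma Adjl.append_left {l : List ℕ} {i j : ℕ} (h : Adjl l i j) (t : List ℕ) :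
    Adjl (l ++ t) i j := h.mono (l.prefix_append t).isInfix

lemma Adjl.append_right {l : List ℕ} {i j : ℕ} (h : Adjl l i j) (t : List ℕ) :
    Adjl (t ++ l) i j := h.mono (List.suffix_append t l).isInfix

lemma Adjl.swap {l : List ℕ} {i j : ℕ} (h : Adjl l i j) : Adjl l j i := h.symm

/-- If `l` ends with `x`, then in `l ++ y :: t` the pair `[x, y]` occurs. -/
lemma infix_last_cons {l : List ℕ} (h : l ≠ []) {x : ℕ} (hx : l.getLast h = x) (y : ℕ)
    (t : List ℕ) : [x, y] <:+: l ++ y :: t := by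
  have hl : l = l.dropLast ++ [x] := by rw [← hx]; exact (List.dropLast_append_getLast h).symm
  refine ⟨l.dropLast, t, ?_⟩
  conv_rhs => rw [hl]
  simp

lemma infix_getElem {x y : ℕ} {l : List ℕ} (h : [x, y] <:+: l) :
    ∃ k, ∃ hk : k + 1 < l.length, l[k]'(Nat.lt_of_succ_lt hk) = x ∧ l[k + 1]'hk = y := by
  obtain ⟨s, t, hst⟩ := h
  have h2 : l = s ++ x :: y :: t := by rw [← hst]; simp
  subst h2
  refine ⟨s.length, by simp, ?_, ?_⟩
  · simp [List.getElem_append_right (le_refl s.length)]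
  · simp [List.getElem_append_right (Nat.le_succ_of_le (le_refl s.length))]

lemma infix_getLast?_cons {l : List ℕ} {x : ℕ} (hx : l.getLast? = some x) (y : ℕ)
    (t : List ℕ) : [x, y] <:+: l ++ y :: t := by
  have hne : l ≠ [] := by rintro rfl; simp at hx
  refine infix_last_cons hne ?_ y t
  rw [List.getLast?_eq_getLast hne] at hx
  exact Option.some_injective _ hx

/-- the alternating letter: `a` on odd, `b` on even. -/
def wab (a b i : ℕ) : ℕ := if i % 2 = 1 then a else b

lemma wab_mem (a b i : ℕ) : wab a b i = a ∨ wab a b i = b := by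
  unfold wab; split <;> simp

lemma wab_ne (a b i : ℕ) {x : ℕ} (ha : x ≠ a) (hb : x ≠ b) : wab a b i ≠ x := by
  rcases wab_mem a b i with h | h <;> rw [h] <;> omega

lemma wab_succ_ne (a b i : ℕ) (hab : a ≠ b) : wab a b i ≠ wab a b (i + 1) := by
  unfold wab
  rcases Nat.mod_two_eq_zero_or_one i with h | h <;>
    simp [h, Nat.succ_mod_two_eq_one_iff, Nat.succ_mod_two_eq_zero_iff] <;> omega

lemma wab_pair (a b i : ℕ) :
    (wab a b i = a ∧ wab a b (i+1) = b) ∨ (wab a b i = b ∧ wab a b (i+1) = a) := by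
  unfold wab
  rcases Nat.mod_two_eq_zero_or_one i with h | h <;>
    simp [h, Nat.succ_mod_two_eq_one_iff, Nat.succ_mod_two_eq_zero_iff] <;> omega

/-- the zig-zag block list `[1, w₁, 2, w₂, …, k, w_k]`. -/
def zz (a b : ℕ) : ℕ → List ℕ
  | 0 => []
  | k + 1 => zz a b k ++ [k + 1, wab a b (k + 1)]

/-- the new-colors walk without its starting `0`: `a :: b :: zz a b k`. -/
def Zl (a b k : ℕ) : List ℕ := a :: b :: zz a b k

lemma Zl_getLast? (a b k : ℕ) : (Zl a b k).getLast? = some (wab a b k) := by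
  induction k with
  | zero => simp [Zl, zz, wab]
  | succ k ih => show ((Zl a b k) ++ [k+1, wab a b (k+1)]).getLast? = _; simp

lemma Zl_length (a b k : ℕ) : (Zl a b k).length = 2 * k + 2 := by
  induction k with
  | zero => simp [Zl, zz]
  | succ k ih =>
    show ((Zl a b k) ++ [k+1, wab a b (k+1)]).length = _
    simp only [List.length_append] at *; simp [ih]; omega

lemma Zl_mem (a b k : ℕ) : ∀ x ∈ Zl a b k, x = a ∨ x = b ∨ (1 ≤ x ∧ x ≤ k) := by
  induction k with
  | zero => simp [Zl, zz]
  | succ k ih =>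
    intro x hx
    have hzl : Zl a b (k+1) = Zl a b k ++ [k+1, wab a b (k+1)] := rfl
    rw [hzl, List.mem_append] at hx
    rcases hx with h | h
    · rcases ih x h with h' | h' | h' <;> [exact Or.inl h'; exact Or.inr (Or.inl h');
        exact Or.inr (Or.inr ⟨h'.1, h'.2.trans (Nat.le_succ k)⟩)]
    · simp only [List.mem_cons, List.not_mem_nil, or_false] at h
      rcases h with h | h
      · subst h; right; right; omega
      · subst h; rcases wab_mem a b (k+1) with h' | h' <;> simp [h']

lemma Zl_chain' {a b : ℕ} (hab : a ≠ b) (k : ℕ) (hk : ∀ i, 1 ≤ i → i ≤ k → i ≠ a ∧ i ≠ b) :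
    (Zl a b k).Chain' (· ≠ ·) := by
  induction k with
  | zero => simp [Zl, zz, hab, List.Chain']
  | succ k ih =>
    have hzl : Zl a b (k+1) = Zl a b k ++ [k+1, wab a b (k+1)] := rfl
    rw [hzl, List.Chain', List.isChain_append]
    refine ⟨ih (fun i h1 h2 => hk i h1 (h2.trans (Nat.le_succ k))), ?_, ?_⟩
    · have h2 := hk (k+1) (by omega) (le_refl _)
      exact List.isChain_cons_cons.mpr ⟨(wab_ne a b (k+1) h2.1 h2.2).symm, List.isChain_singleton _⟩
    · intro x hx y hy
      rw [Zl_getLast? a b k] at hx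
      simp at hx hy
      subst hx; subst hy
      have h2 := hk (k+1) (by omega) (le_refl _)
      exact wab_ne a b k h2.1 h2.2

lemma Zl_adj {a b : ℕ} (hab : a ≠ b) (k : ℕ) :
    ∀ i, 1 ≤ i → i ≤ k → Adjl (Zl a b k) i a ∧ Adjl (Zl a b k) i b := by
  induction k with
  | zero => omega
  | succ k ih =>
    intro i h1 h2
    have hzl : Zl a b (k+1) = Zl a b k ++ [k+1, wab a b (k+1)] := rfl
    rcases Nat.lt_or_ge i (k+1) with h | h
    · have := ih i h1 (by omega)
      rw [hzl]
      exact ⟨this.1.append_left _, this.2.append_left _⟩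
    · have hik : i = k + 1 := by omega
      subst hik
      -- [wab a b k, k+1] and [k+1, wab a b (k+1)] are both infixes
      have h1' : [wab a b k, k+1] <:+: Zl a b (k+1) := by
        rw [hzl]
        exact (infix_getLast?_cons (Zl_getLast? a b k) (k+1) [wab a b (k+1)])
      have h2' : [k+1, wab a b (k+1)] <:+: Zl a b (k+1) := by
        rw [hzl]
        exact ((List.suffix_append _ _).isInfix)
      rcases wab_pair a b k with ⟨ha, hb⟩ | ⟨hb, ha⟩
      · rw [ha] at h1'; rw [hb] at h2'
        exact ⟨Or.inr h1', Or.inl h2'⟩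
      · rw [hb] at h1'; rw [ha] at h2'
        exact ⟨Or.inl h2', Or.inr h1'⟩

lemma adjl_of_lt {q : ℕ} {l : List ℕ} (h : ∀ i j, j < q → i < j → Adjl l i j) :
    ∀ i j, i < q → j < q → i ≠ j → Adjl l i j := by
  intro i j hi hj hne
  rcases Nat.lt_or_ge i j with hlt | hge
  · exact h i j hj hlt
  · exact (h j i hi (by omega)).symm

/-- Eulerian-circuit list for the odd complete graph `K_{2m+3}`, starting and
ending at `0`. -/
def oddList : ℕ → List ℕ
  | 0 => [0, 1, 2, 0]
  | m + 1 => oddList m ++ (Zl (2*m+3) (2*m+4) (2*m+2) ++ [0])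

lemma oddList_getLast? (m : ℕ) : (oddList m).getLast? = some 0 := by
  cases m with
  | zero => rfl
  | succ m => show (oddList m ++ (Zl (2*m+3) (2*m+4) (2*m+2) ++ [0])).getLast? = _; simp

lemma oddList_mem (m : ℕ) : ∀ x ∈ oddList m, x < 2*m+3 := by
  induction m with
  | zero => intro x hx; simp [oddList] at hx; omega
  | succ m ih =>
    intro x hx
    rw [show oddList (m+1) = oddList m ++ (Zl (2*m+3) (2*m+4) (2*m+2) ++ [0]) from rfl,
      List.mem_append, List.mem_append] at hx
    rcases hx with h | h | h
    · have := ih x h; omega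
    · rcases Zl_mem _ _ _ x h with h' | h' | h' <;> omega
    · simp at h; omega

lemma oddList_length (m : ℕ) : (oddList m).length = 2*m^2 + 5*m + 4 := by
  induction m with
  | zero => rfl
  | succ m ih =>
    rw [show oddList (m+1) = oddList m ++ (Zl (2*m+3) (2*m+4) (2*m+2) ++ [0]) from rfl]
    simp [ih, Zl_length]; ring

lemma oddList_chain' (m : ℕ) : (oddList m).Chain' (· ≠ ·) := by
  induction m with
  | zero => simp [oddList, List.Chain']
  | succ m ih =>
    rw [show oddList (m+1) = oddList m ++ (Zl (2*m+3) (2*m+4) (2*m+2) ++ [0]) from rfl]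
    rw [List.Chain', List.isChain_append]
    refine ⟨ih, ?_, ?_⟩
    · rw [List.isChain_append]
      refine ⟨Zl_chain' (by omega) _ (fun i h1 h2 => by omega), by simp, ?_⟩
      intro x hx y hy
      rw [Zl_getLast?] at hx
      simp at hx hy
      subst hx; subst hy
      exact wab_ne _ _ _ (by omega) (by omega)
    · intro x hx y hy
      rw [oddList_getLast? m] at hx
      simp [Zl] at hx hy
      omega

lemma oddList_adj (m : ℕ) : ∀ i j, i < 2*m+3 → j < 2*m+3 → i ≠ j → Adjl (oddList m) i j := by
  induction m with
  | zero =>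
    refine adjl_of_lt ?_
    intro i j hj hij
    interval_cases j <;> interval_cases i
    · exact Or.inl ⟨[], [2, 0], rfl⟩
    · exact Or.inr ⟨[0, 1], [], rfl⟩
    · exact Or.inl ⟨[0], [0], rfl⟩
  | succ m ih =>
    refine adjl_of_lt ?_
    intro i j hj hij
    set a := 2*m+3 with ha
    set b := 2*m+4 with hb
    have hodd : oddList (m+1) = oddList m ++ (Zl a b (2*m+2) ++ [0]) := rfl
    have hZin : Zl a b (2*m+2) <:+: oddList (m+1) := by
      rw [hodd]
      exact ((Zl a b (2*m+2)).prefix_append [0]).isInfix.trans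
        (List.suffix_append _ _).isInfix
    rcases Nat.lt_or_ge j a with hja | hja
    · exact ((ih i j (by omega) (by omega) (by omega)).mono
        (by rw [hodd]; exact (List.prefix_append _ _).isInfix))
    · rcases Nat.lt_or_ge j b with hjb | hjb
      · -- j = a
        have hj' : j = a := by omega
        subst hj'
        rcases Nat.eq_zero_or_pos i with h0 | hpos
        · subst h0
          refine Or.inl ?_
          rw [hodd, show Zl a b (2*m+2) ++ [0] = a :: ((b :: zz a b (2*m+2)) ++ [0]) from rfl]
          exact infix_getLast?_cons (oddList_getLast? m) a _
        · exact ((Zl_adj (by omega) (2*m+2) i hpos (by omega)).1).mono hZin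
      · -- j = b
        have hj' : j = b := by omega
        subst hj'
        rcases Nat.eq_zero_or_pos i with h0 | hpos
        · subst h0
          refine Or.inr ?_
          have h1 : [wab a b (2*m+2), 0] <:+: Zl a b (2*m+2) ++ [0] :=
            infix_getLast?_cons (Zl_getLast? a b (2*m+2)) 0 []
          have h2 : wab a b (2*m+2) = b := by
            unfold wab; have : (2*m+2) % 2 = 0 := by omega
            simp [this]
          rw [h2] at h1
          exact h1.trans (by rw [hodd]; exact (List.suffix_append _ _).isInfix)
        · rcases Nat.lt_or_ge i a with hia | hia
          · exact ((Zl_adj (by omega) (2*m+2) i hpos (by omega)).2).mono hZin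
          · -- i = a, pair (a, b)
            have hi' : i = a := by omega
            subst hi'
            exact Or.inl (List.IsInfix.trans ⟨[], zz a b (2*m+2), rfl⟩ hZin)

/-- tail attaching the extra color `a` to all of `1, …, 2t` (and, via the
junction, to `0`). -/
def et (a : ℕ) : ℕ → List ℕ
  | 0 => [a]
  | t + 1 => et a t ++ [2*t+1, 2*t+2, a]

lemma et_head (a t : ℕ) : ∃ r, et a t = a :: r := by
  induction t with
  | zero => exact ⟨[], rfl⟩
  | succ t ih => obtain ⟨r, hr⟩ := ih; exact ⟨r ++ [2*t+1, 2*t+2, a], by simp [et, hr]⟩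

lemma et_getLast? (a t : ℕ) : (et a t).getLast? = some a := by
  cases t with
  | zero => rfl
  | succ t => show (et a t ++ [2*t+1, 2*t+2, a]).getLast? = _; simp

lemma et_length (a t : ℕ) : (et a t).length = 3*t + 1 := by
  induction t with
  | zero => rfl
  | succ t ih => show (et a t ++ [2*t+1, 2*t+2, a]).length = _; simp [ih]; omega

lemma et_mem (a t : ℕ) : ∀ x ∈ et a t, x = a ∨ (1 ≤ x ∧ x ≤ 2*t) := by
  induction t with
  | zero => intro x hx; simp [et] at hx; omega
  | succ t ih =>
    intro x hx
    rw [show et a (t+1) = et a t ++ [2*t+1, 2*t+2, a] from rfl, List.mem_append] at hx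
    rcases hx with h | h
    · rcases ih x h with h' | h' <;> omega
    · simp at h; omega

lemma et_chain' {a : ℕ} (t : ℕ) (h : 2*t < a) : (et a t).Chain' (· ≠ ·) := by
  induction t with
  | zero => simp [et, List.Chain']
  | succ t ih =>
    rw [show et a (t+1) = et a t ++ [2*t+1, 2*t+2, a] from rfl, List.Chain', List.isChain_append]
    refine ⟨ih (by omega), ?_, ?_⟩
    · refine List.isChain_cons_cons.mpr ⟨by omega, List.isChain_cons_cons.mpr ⟨by omega, ?_⟩⟩
      simp
    · intro x hx y hy
      rw [et_getLast?] at hx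
      simp at hx hy
      omega

lemma et_adj (a t : ℕ) : ∀ i, 1 ≤ i → i ≤ 2*t → Adjl (et a t) i a := by
  induction t with
  | zero => omega
  | succ t ih =>
    intro i h1 h2
    have het : et a (t+1) = et a t ++ [2*t+1, 2*t+2, a] := rfl
    rcases Nat.lt_or_ge i (2*t+1) with h | h
    · rw [het]; exact (ih i h1 (by omega)).append_left _
    · rcases Nat.lt_or_ge i (2*t+2) with h' | h'
      · -- i = 2t+1 : [a, 2t+1] occurs at the junction
        have hi : i = 2*t+1 := by omega
        subst hi
        refine Or.inr ?_
        rw [het]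
        exact infix_getLast?_cons (et_getLast? a t) _ _
      · -- i = 2t+2 : [2t+2, a] is a suffix
        have hi : i = 2*t+2 := by omega
        subst hi
        refine Or.inl ?_
        rw [het, show et a t ++ [2*t+1, 2*t+2, a] = (et a t ++ [2*t+1]) ++ ([2*t+2, a]) by simp]
        exact (List.suffix_append _ _).isInfix

/-- complete proper coloring list for even `q = 2k+2` of optimal length. -/
def evenList : ℕ → List ℕ
  | 0 => [0, 1]
  | m + 1 => oddList m ++ et (2*m+3) (m+1)

lemma evenList_length (k : ℕ) : (evenList k).length = 2*(k+1)^2 := by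
  cases k with
  | zero => rfl
  | succ m =>
    show (oddList m ++ et (2*m+3) (m+1)).length = _
    simp [oddList_length, et_length]; ring

lemma evenList_mem (k : ℕ) : ∀ x ∈ evenList k, x < 2*k+2 := by
  cases k with
  | zero => intro x hx; simp [evenList] at hx; omega
  | succ m =>
    intro x hx
    rw [show evenList (m+1) = oddList m ++ et (2*m+3) (m+1) from rfl, List.mem_append] at hx
    rcases hx with h | h
    · have := oddList_mem m x h; omega
    · rcases et_mem _ _ x h with h' | h' <;> omega

lemma evenList_chain' (k : ℕ) : (evenList k).Chain' (· ≠ ·) := by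
  cases k with
  | zero => simp [evenList, List.Chain']
  | succ m =>
    rw [show evenList (m+1) = oddList m ++ et (2*m+3) (m+1) from rfl, List.Chain', List.isChain_append]
    refine ⟨oddList_chain' m, et_chain' _ (by omega), ?_⟩
    intro x hx y hy
    rw [oddList_getLast?] at hx
    obtain ⟨r, hr⟩ := et_head (2*m+3) (m+1)
    rw [hr] at hy
    simp at hx hy
    omega

lemma evenList_adj (k : ℕ) :
    ∀ i j, i < 2*k+2 → j < 2*k+2 → i ≠ j → Adjl (evenList k) i j := by
  cases k with
  | zero =>
    refine adjl_of_lt ?_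
    intro i j hj hij
    have hj1 : j = 1 := by omega
    have hi0 : i = 0 := by omega
    subst hj1; subst hi0
    exact Or.inl ⟨[], [], rfl⟩
  | succ m =>
    refine adjl_of_lt ?_
    intro i j hj hij
    set a := 2*m+3 with ha
    have hev : evenList (m+1) = oddList m ++ et a (m+1) := rfl
    rcases Nat.lt_or_ge j a with hja | hja
    · exact ((oddList_adj m i j (by omega) (by omega) (by omega)).mono
        (by rw [hev]; exact (List.prefix_append _ _).isInfix))
    · have hj' : j = a := by omega
      subst hj'
      rcases Nat.eq_zero_or_pos i with h0 | hpos
      · subst h0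
        refine Or.inl ?_
        obtain ⟨r, hr⟩ := et_head a (m+1)
        rw [hev, hr]
        exact infix_getLast?_cons (oddList_getLast? m) a r
      · exact (et_adj a (m+1) i hpos (by omega)).mono
          (by rw [hev]; exact (List.suffix_append _ _).isInfix)

lemma good_oddList (m : ℕ) : Good (2*m+3) (oddList m) :=
  ⟨oddList_mem m, oddList_chain' m, oddList_adj m⟩

lemma good_evenList (k : ℕ) : Good (2*k+2) (evenList k) :=
  ⟨evenList_mem k, evenList_chain' k, evenList_adj k⟩

lemma good_prepend {q : ℕ} (hq2 : 2 ≤ q) {l : List ℕ} (hg : Good q l) (hne : l ≠ []) :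
    ∃ l', Good q l' ∧ l'.length = l.length + 1 ∧ l' ≠ [] := by
  obtain ⟨x, r, rfl⟩ := List.exists_cons_of_ne_nil hne
  set y : ℕ := if x = 0 then 1 else 0 with hy
  have hyx : y ≠ x := by rw [hy]; split <;> omega
  have hyq : y < q := by rw [hy]; split <;> omega
  refine ⟨y :: x :: r, ⟨?_, ?_, ?_⟩, by simp, by simp⟩
  · intro z hz
    rcases List.mem_cons.mp hz with h | h
    · omega
    · exact hg.1 z h
  · exact List.isChain_cons_cons.mpr ⟨hyx, hg.2.1⟩
  · intro i j hi hj hij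
    exact (hg.2.2 i j hi hj hij).mono ((List.suffix_cons y _).isInfix)

lemma good_extend {q : ℕ} (hq2 : 2 ≤ q) :
    ∀ d (l : List ℕ), Good q l → l ≠ [] → ∃ l', Good q l' ∧ l'.length = l.length + d := by
  intro d
  induction d with
  | zero => exact fun l hg _ => ⟨l, hg, rfl⟩
  | succ d ih =>
    intro l hg hne
    obtain ⟨l', hg', hlen', hne'⟩ := good_prepend hq2 hg hne
    obtain ⟨l'', hg'', hlen''⟩ := ih l' hg' hne'
    exact ⟨l'', hg'', by omega⟩

lemma exists_good_exact (q n : ℕ) (hq2 : 2 ≤ q) (h1 : q.choose 2 ≤ n)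
    (h2 : q * ((q - 1) ⌈/⌉ 2) ≤ n + 1) :
    ∃ l, Good q l ∧ l.length = n + 1 := by
  rcases Nat.even_or_odd q with he | ho
  · -- q = 2k+2
    obtain ⟨k', hk'⟩ := he
    have hk : ∃ k, q = 2*k + 2 := ⟨k' - 1, by omega⟩
    obtain ⟨k, rfl⟩ := hk
    have hceil : (2*k + 2 - 1) ⌈/⌉ 2 = k + 1 := by
      rw [Nat.ceilDiv_eq_add_pred_div]; omega
    rw [hceil] at h2
    have hlen : (evenList k).length ≤ n + 1 := by
      rw [evenList_length]
      have : (2*k+2) * (k+1) = 2*(k+1)^2 := by ring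
      omega
    have hne : evenList k ≠ [] := by
      have := evenList_length k
      intro h; rw [h] at this; simp at this
    obtain ⟨l', hg', hlen'⟩ :=
      good_extend hq2 (n + 1 - (evenList k).length) _ (good_evenList k) hne
    exact ⟨l', hg', by omega⟩
  · -- q = 2m+3
    obtain ⟨m', hm'⟩ := ho
    have hm : ∃ m, q = 2*m + 3 := ⟨m' - 1, by omega⟩
    obtain ⟨m, rfl⟩ := hm
    have hch : (2*m+3).choose 2 = 2*(m*m) + 5*m + 3 := by
      rw [Nat.choose_two_right]
      have h3 : (2*m+3) * (2*m+3-1) = 4*(m*m) + 10*m + 6 := by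
        have : 2*m+3-1 = 2*m+2 := by omega
        rw [this]; ring
      omega
    have hlen : (oddList m).length ≤ n + 1 := by
      rw [oddList_length]
      have : m^2 = m*m := sq m
      omega
    have hne : oddList m ≠ [] := by
      have := oddList_length m
      intro h; rw [h] at this; simp at this
    obtain ⟨l', hg', hlen'⟩ :=
      good_extend hq2 (n + 1 - (oddList m).length) _ (good_oddList m) hne
    exact ⟨l', hg', by omega⟩

lemma coloring_of_good {n q : ℕ} (hq : 1 ≤ q) {l : List ℕ} (hg : Good q l)
    (hlen : l.length = n + 1) :
    ∃ c : Fin (n + 1) → Fin q, IsCompleteProperColoring (pathGraph n) q c := by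
  have hget : ∀ v : Fin (n + 1), (v : ℕ) < l.length := fun v => by rw [hlen]; exact v.2
  refine ⟨fun v => ⟨l[(v : ℕ)]'(hget v), hg.1 _ (List.getElem_mem _)⟩, ?_, ?_⟩
  · -- complete
    intro i j hij
    have hadj := hg.2.2 i.1 j.1 i.2 j.2 (Fin.val_ne_of_ne hij)
    rcases hadj with h | h
    · obtain ⟨k, hk, h1, h2⟩ := infix_getElem h
      refine ⟨⟨k, by omega⟩, ⟨k + 1, by omega⟩, Or.inl rfl, ?_, ?_⟩
      · exact Fin.ext (by simpa using h1)
      · exact Fin.ext (by simpa using h2)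
    · obtain ⟨k, hk, h1, h2⟩ := infix_getElem h
      refine ⟨⟨k + 1, by omega⟩, ⟨k, by omega⟩, Or.inr rfl, ?_, ?_⟩
      · exact Fin.ext (by simpa using h2)
      · exact Fin.ext (by simpa using h1)
  · -- proper
    intro u v hadj hc
    have hch := List.isChain_iff_getElem.mp hg.2.1
    rcases hadj with h | h
    · have hne := hch u.1 (by omega)
      have hval : l[(u : ℕ)]'(hget u) = l[(v : ℕ)]'(hget v) := congrArg Fin.val hc
      apply hne
      rw [hval]
      simp only [← h]
    · have hne := hch v.1 (by omega)
      have hval : l[(v : ℕ)]'(hget v) = l[(u : ℕ)]'(hget u) := congrArg Fin.val hc.symm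
      apply hne
      rw [hval]
      simp only [← h]

open Classical in
lemma ub_choose {n k : ℕ} {c : Fin (n + 1) → Fin k}
    (hc : IsCompleteColoring (pathGraph n) k c) : k.choose 2 ≤ n := by
  classical
  -- injection from off-diagonal Sym2 into edge positions
  have hex : ∀ z : {z : Sym2 (Fin k) // ¬ z.IsDiag},
      ∃ e : Fin n, s(c ⟨e.1, by omega⟩, c ⟨e.1 + 1, by omega⟩) = z.1 := by
    rintro ⟨z, hz⟩
    induction z using Sym2.inductionOn with
    | hf i j =>
      have hij : i ≠ j := by simpa [Sym2.mk_isDiag_iff] using hz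
      obtain ⟨u, v, hadj, hcu, hcv⟩ := hc i j hij
      rcases hadj with h | h
      · refine ⟨⟨u.1, by omega⟩, ?_⟩
        have h1 : (⟨u.1, by omega⟩ : Fin (n + 1)) = u := Fin.ext rfl
        have h2 : (⟨u.1 + 1, by omega⟩ : Fin (n + 1)) = v := Fin.ext h
        rw [h1, h2, hcu, hcv]
      · refine ⟨⟨v.1, by omega⟩, ?_⟩
        have h1 : (⟨v.1, by omega⟩ : Fin (n + 1)) = v := Fin.ext rfl
        have h2 : (⟨v.1 + 1, by omega⟩ : Fin (n + 1)) = u := Fin.ext h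
        rw [h1, h2, hcu, hcv]
        exact Sym2.eq_swap
  set f : {z : Sym2 (Fin k) // ¬ z.IsDiag} → Fin n := fun z => (hex z).choose with hf
  have hinj : Function.Injective f := by
    intro z1 z2 h
    apply Subtype.ext
    have h' : ((hex z1).choose : Fin n) = (hex z2).choose := h
    rw [← (hex z1).choose_spec, ← (hex z2).choose_spec, h']
  have hcard := Fintype.card_le_of_injective f hinj
  rw [Sym2.card_subtype_not_diag] at hcard
  simpa using hcard

lemma ub_ceil {n k : ℕ} {c : Fin (n + 1) → Fin k}
    (hc : IsCompleteColoring (pathGraph n) k c) : k * ((k - 1) ⌈/⌉ 2) ≤ n + 1 := by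
  classical
  -- per-color class size lower bound
  have key : ∀ i : Fin k, k - 1 ≤ 2 * (Finset.univ.filter (fun v => c v = i)).card := by
    intro i
    set s : Finset (Fin k) := Finset.univ.filter (· ≠ i) with hs
    have hex : ∀ j : Fin k, j ≠ i → ∃ p : Fin (n+1) × Fin (n+1),
        (pathGraph n).Adj p.1 p.2 ∧ c p.1 = i ∧ c p.2 = j := by
      intro j hj
      obtain ⟨u, v, hadj, hcu, hcv⟩ := hc i j (Ne.symm hj)
      exact ⟨(u, v), hadj, hcu, hcv⟩
    set g : Fin k → Fin (n + 1) := fun j =>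
      if h : ∃ p : Fin (n+1) × Fin (n+1),
          (pathGraph n).Adj p.1 p.2 ∧ c p.1 = i ∧ c p.2 = j then h.choose.1 else 0 with hg
    have hcard : s.card ≤ 2 * (s.image g).card := by
      apply Finset.card_le_mul_card_image
      intro u hu
      -- fiber of g over u injects into colors of neighbors of u
      have hsub : (s.filter fun j => g j = u) ⊆
          (Finset.univ.filter fun x : Fin (n+1) => (pathGraph n).Adj u x).image c := by
        intro j hj
        rw [Finset.mem_filter] at hj
        obtain ⟨hjs, hju⟩ := hj
        rw [hs, Finset.mem_filter] at hjs
        have hej := hex j hjs.2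
        rw [hg] at hju
        simp only [dif_pos hej] at hju
        have hspec := hej.choose_spec
        rw [Finset.mem_image]
        exact ⟨hej.choose.2, by simp [← hju, hspec.1], hspec.2.2⟩
      refine (Finset.card_le_card hsub).trans ?_
      refine (Finset.card_image_le).trans ?_
      -- at most two neighbors
      have hsub2 : (Finset.univ.filter fun x : Fin (n+1) => (pathGraph n).Adj u x).image
          (Fin.val) ⊆ {u.1 + 1, u.1 - 1} := by
        intro m hm
        rw [Finset.mem_image] at hm
        obtain ⟨x, hx, rfl⟩ := hm
        rw [Finset.mem_filter] at hx
        rcases hx.2 with h | h <;> simp <;> omega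
      have h2 : ({u.1 + 1, u.1 - 1} : Finset ℕ).card ≤ 2 :=
        (Finset.card_insert_le _ _).trans (by simp)
      have := (Finset.card_le_card hsub2).trans h2
      rwa [Finset.card_image_of_injective _ Fin.val_injective] at this
    have himg : (s.image g) ⊆ Finset.univ.filter (fun v => c v = i) := by
      intro u hu
      rw [Finset.mem_image] at hu
      obtain ⟨j, hj, rfl⟩ := hu
      rw [hs, Finset.mem_filter] at hj
      have hej := hex j hj.2
      rw [Finset.mem_filter]
      refine ⟨Finset.mem_univ _, ?_⟩
      rw [hg]
      simp only [dif_pos hej]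
      exact hej.choose_spec.2.1
    have hscard : s.card = k - 1 := by
      rw [hs, Finset.filter_ne', Finset.card_erase_of_mem (Finset.mem_univ _)]
      simp
    calc k - 1 = s.card := hscard.symm
      _ ≤ 2 * (s.image g).card := hcard
      _ ≤ 2 * (Finset.univ.filter (fun v => c v = i)).card := by
          have := Finset.card_le_card himg; omega
  -- sum over colors
  have hsum : ∑ i : Fin k, (Finset.univ.filter (fun v => c v = i)).card = n + 1 := by
    have := Finset.card_eq_sum_card_fiberwise
      (f := c) (s := Finset.univ) (t := Finset.univ) (fun x _ => Finset.mem_univ _)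
    simpa using this.symm
  have hlow : ∀ i : Fin k, (k - 1) ⌈/⌉ 2 ≤ (Finset.univ.filter (fun v => c v = i)).card := by
    intro i
    have := key i
    rw [Nat.ceilDiv_eq_add_pred_div]
    omega
  calc k * ((k - 1) ⌈/⌉ 2)
      = (Finset.univ : Finset (Fin k)).card • ((k - 1) ⌈/⌉ 2) := by simp [Finset.card_univ]
    _ ≤ ∑ i : Fin k, (Finset.univ.filter (fun v => c v = i)).card :=
        Finset.card_nsmul_le_sum _ _ _ (fun i _ => hlow i)
    _ = n + 1 := hsum

/-- For `n ≥ 2`, if `q` is the maximal integer with `C(q,2) ≤ n` and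
`q·⌈(q−1)/2⌉ ≤ n + 1`, then `Ψ(P_n) = q`. -/
theorem achromatic_path (n : ℕ) (hn : 2 ≤ n) (q : ℕ)
    (hq : q.choose 2 ≤ n ∧ q * ((q - 1) ⌈/⌉ 2) ≤ n + 1)
    (hmax : ∀ q' : ℕ, q'.choose 2 ≤ n ∧ q' * ((q' - 1) ⌈/⌉ 2) ≤ n + 1 → q' ≤ q) :
    achromaticNumber (pathGraph n) = q := by
  classical
  have hq2 : 2 ≤ q := by
    apply hmax 2
    constructor
    · have h22 : Nat.choose 2 2 = 1 := rfl
      omega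
    · rw [Nat.ceilDiv_eq_add_pred_div]; omega
  have hqS : q ∈ {k | ∃ c : Fin (n+1) → Fin k, IsCompleteProperColoring (pathGraph n) k c} := by
    obtain ⟨l, hg, hlen⟩ := exists_good_exact q n hq2 hq.1 hq.2
    obtain ⟨c, hc⟩ := coloring_of_good (by omega) hg hlen
    exact ⟨c, hc⟩
  have hub : ∀ k ∈ {k | ∃ c : Fin (n+1) → Fin k, IsCompleteProperColoring (pathGraph n) k c},
      k ≤ q := by
    rintro k ⟨c, hc⟩
    exact hmax k ⟨ub_choose hc.1, ub_ceil hc.1⟩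
  exact le_antisymm (csSup_le ⟨q, hqS⟩ hub) (le_csSup ⟨q, hub⟩ hqS)
end

section
/- For every integer n ≥ 2, the complete coloring number and the achromatic number of the path with n edges coincide: Γ(P_n) = Ψ(P_n). -/
section Aux

variable {α : Type*}


variable {α : Type*}

def cpairs (l : List α) : List (α × α) := l.zip l.tail

@[simp] lemma cpairs_nil : cpairs ([] : List α) = [] := rfl
@[simp] lemma cpairs_singleton (a : α) : cpairs [a] = [] := rfl

@[simp] lemma cpairs_cons_cons (a b : α) (t : List α) :
    cpairs (a :: b :: t) = (a, b) :: cpairs (b :: t) := rfl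

/-- extend a list by duplicating-alternating at the front -/
def extF : List α → List α
  | a :: b :: t => b :: a :: b :: t
  | l => l

lemma extF_length {l : List α} (h : 2 ≤ l.length) : (extF l).length = l.length + 1 := by
  match l with
  | a :: b :: t => simp [extF]
  | [] => simp at h
  | [a] => simp at h

lemma extF_chain' [DecidableEq α] {l : List α} (h : l.Chain' (· ≠ ·)) :
    (extF l).Chain' (· ≠ ·) := by
  match l with
  | a :: b :: t =>
    simp only [List.Chain'] at h ⊢
    rw [List.isChain_cons_cons] at h
    exact List.isChain_cons_cons.mpr ⟨(h.1 ·.symm), List.isChain_cons_cons.mpr h⟩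
  | [] => exact h
  | [a] => exact h

lemma extF_cpairs {l : List α} {p : α × α} (h : p ∈ cpairs l) : p ∈ cpairs (extF l) := by
  match l with
  | a :: b :: t =>
    show p ∈ cpairs (b :: a :: b :: t)
    rw [cpairs_cons_cons] at h ⊢
    exact List.mem_cons_of_mem _ h
  | [] => exact h
  | [a] => exact h

lemma extF_iter {l : List α} [DecidableEq α] (h2 : 2 ≤ l.length)
    (hc : l.Chain' (· ≠ ·)) (m : ℕ) :
    (extF^[m] l).length = l.length + m ∧ (extF^[m] l).Chain' (· ≠ ·) ∧
      ∀ p, p ∈ cpairs l → p ∈ cpairs (extF^[m] l) := by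
  induction m with
  | zero => simp only [Function.iterate_zero, id]; exact ⟨by omega, hc, fun p h => h⟩
  | succ m ih =>
    rw [Function.iterate_succ_apply']
    obtain ⟨h1, h2', h3⟩ := ih
    refine ⟨?_, extF_chain' h2', fun p hp => extF_cpairs (h3 p hp)⟩
    rw [extF_length (by omega)]
    omega

/-- index version of pair membership -/
lemma mem_cpairs_iff {l : List α} {x y : α} :
    (x, y) ∈ cpairs l ↔ ∃ t, ∃ h : t + 1 < l.length,
      l[t]'(by omega) = x ∧ l[t + 1]'h = y := by
  induction l with
  | nil => simp [cpairs]
  | cons a t ih =>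
    match t with
    | [] =>
      simp only [cpairs, List.tail, List.zip_nil_right, List.not_mem_nil, false_iff]
      rintro ⟨s, hs, -⟩
      simp at hs
    | b :: t =>
      rw [cpairs_cons_cons, List.mem_cons, ih]
      constructor
      · rintro (h | ⟨s, hs, h1, h2⟩)
        · obtain ⟨rfl, rfl⟩ := Prod.mk.injEq x y a b ▸ h
          exact ⟨0, by simp, rfl, rfl⟩
        · exact ⟨s + 1, by simp at hs ⊢; omega, h1, h2⟩
      · rintro ⟨s, hs, h1, h2⟩
        match s with
        | 0 => left; simp at h1 h2; simp [h1, h2]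
        | s + 1 =>
          right
          exact ⟨s, by simp at hs ⊢; omega, h1, h2⟩


/-- consecutive pairs of a list -/
lemma destutter'_head (R : α → α → Prop) [DecidableRel R] (a : α) (l : List α) :
    ∃ rest, l.destutter' R a = a :: rest := by
  induction l generalizing a with
  | nil => exact ⟨[], rfl⟩
  | cons b t ih =>
    rw [List.destutter'_cons]
    split
    · exact ⟨_, rfl⟩
    · exact ih a

lemma mem_cpairs_destutter' (a : α) (l : List α) {x y : α} [DecidableEq α]
    (hmem : (x, y) ∈ cpairs (a :: l)) (hxy : x ≠ y) :
    (x, y) ∈ cpairs (l.destutter' (· ≠ ·) a) := by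
  induction l generalizing a with
  | nil => simp at hmem
  | cons b t ih =>
    rw [cpairs_cons_cons, List.mem_cons] at hmem
    rw [List.destutter'_cons]
    rcases hmem with h | h
    · obtain ⟨rfl, rfl⟩ := Prod.mk.injEq x y a b ▸ h
      rw [if_pos hxy]
      obtain ⟨rest, hrest⟩ := destutter'_head (· ≠ ·) y t
      rw [hrest]
      simp
    · have := ih b h
      split
      · obtain ⟨rest, hrest⟩ := destutter'_head (· ≠ ·) b t
        rw [hrest] at this ⊢
        exact List.mem_cons_of_mem _ this
      · next hab =>
        push_neg at hab
        subst hab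
        exact this

end Aux

section Aux
variable {α : Type*}

lemma chain'_getElem {R : α → α → Prop} {l : List α} (h : l.Chain' R) {t : ℕ}
    (ht : t + 1 < l.length) : R (l[t]'(by omega)) (l[t + 1]'ht) := by
  simp only [List.Chain'] at h
  rw [List.isChain_iff_getElem] at h
  have := h t (by omega)
  simpa using this

lemma getElem_congr_idx' {l : List α} {i j : ℕ} (h : i = j) (hi : i < l.length) :
    l[i]'hi = l[j]'(h ▸ hi) := by subst h; rfl

lemma main_construction {n k : ℕ} (hk : 2 ≤ k) (c : Fin (n + 1) → Fin k)
    (hc : IsCompleteColoring (pathGraph n) k c) :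
    ∃ c' : Fin (n + 1) → Fin k, IsCompleteProperColoring (pathGraph n) k c' := by
  classical
  set l : List (Fin k) := List.ofFn c with hl
  have hllen : l.length = n + 1 := by simp [hl]
  -- completeness in list form
  have hP : ∀ i j : Fin k, i ≠ j → (i, j) ∈ cpairs l ∨ (j, i) ∈ cpairs l := by
    intro i j hij
    obtain ⟨u, v, hadj, hcu, hcv⟩ := hc i j hij
    have hv : (v : ℕ) < n + 1 := v.isLt
    have hu : (u : ℕ) < n + 1 := u.isLt
    rcases hadj with h | h
    · left
      rw [mem_cpairs_iff]
      refine ⟨(u : ℕ), by rw [hllen]; omega, ?_, ?_⟩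
      · simp only [hl, List.getElem_ofFn, Fin.eta]; exact hcu
      · simp only [hl, List.getElem_ofFn]
        convert hcv using 2
        exact Fin.ext h
    · right
      rw [mem_cpairs_iff]
      refine ⟨(v : ℕ), by rw [hllen]; omega, ?_, ?_⟩
      · simp only [hl, List.getElem_ofFn, Fin.eta]; exact hcv
      · simp only [hl, List.getElem_ofFn]
        convert hcu using 2
        exact Fin.ext h
  clear_value l
  -- destutter
  set d : List (Fin k) := l.destutter (· ≠ ·) with hd
  have hdlen : d.length ≤ n + 1 := by
    rw [← hllen]; exact (List.destutter_sublist _ _).length_le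
  have hdchain : d.Chain' (· ≠ ·) := List.isChain_destutter _ _
  have hdP : ∀ i j : Fin k, i ≠ j → (i, j) ∈ cpairs d ∨ (j, i) ∈ cpairs d := by
    intro i j hij
    have hlne : l ≠ [] := by intro h; rw [h] at hllen; simp at hllen
    obtain ⟨a, t, rfl⟩ := List.exists_cons_of_ne_nil hlne
    rw [hd, List.destutter_cons']
    rcases hP i j hij with h | h
    · exact Or.inl (mem_cpairs_destutter' a t h hij)
    · exact Or.inr (mem_cpairs_destutter' a t h (Ne.symm hij))
  have hd2 : 2 ≤ d.length := by
    have h01 : (⟨0, by omega⟩ : Fin k) ≠ ⟨1, by omega⟩ := by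
      intro h
      have := congrArg Fin.val h
      simp at this
    rcases hdP ⟨0, by omega⟩ ⟨1, by omega⟩ h01 with h | h <;>
      · rw [mem_cpairs_iff] at h
        obtain ⟨t, ht, -⟩ := h
        omega
  -- extend
  set L : List (Fin k) := extF^[n + 1 - d.length] d with hL
  obtain ⟨hLlen, hLchain, hLP⟩ := extF_iter hd2 hdchain (n + 1 - d.length)
  rw [← hL] at hLlen hLchain hLP
  have hLlen' : L.length = n + 1 := by omega
  -- final coloring
  refine ⟨fun v => L[(v : ℕ)]'(by omega), ?_, ?_⟩
  · intro i j hij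
    have key : ∀ x y : Fin k, (x, y) ∈ cpairs L →
        ∃ u v, (pathGraph n).Adj u v ∧ L[(u : ℕ)]'(by omega) = x ∧ L[(v : ℕ)]'(by omega) = y := by
      intro x y hxy
      rw [mem_cpairs_iff] at hxy
      obtain ⟨t, ht, h1, h2⟩ := hxy
      exact ⟨⟨t, by omega⟩, ⟨t + 1, by omega⟩, Or.inl rfl, h1, h2⟩
    rcases hdP i j hij with h | h
    · exact key i j (hLP _ h)
    · obtain ⟨u, v, hadj, h1, h2⟩ := key j i (hLP _ h)
      exact ⟨v, u, hadj.symm, h2, h1⟩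
  · intro u v hadj heq
    have hu : (u : ℕ) < n + 1 := u.isLt
    have hv : (v : ℕ) < n + 1 := v.isLt
    rcases hadj with h | h
    · have hne := chain'_getElem hLchain (t := (u : ℕ)) (by omega)
      apply hne
      rw [getElem_congr_idx' (show (u : ℕ) + 1 = (v : ℕ) from h)]
      exact heq
    · have hne := chain'_getElem hLchain (t := (v : ℕ)) (by omega)
      apply hne
      rw [getElem_congr_idx' (show (v : ℕ) + 1 = (u : ℕ) from h)]
      exact heq.symm

end Aux

/-- For every `n ≥ 2`, `Γ(P_n) = Ψ(P_n)`. -/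
theorem gamma_eq_psi_path (n : ℕ) (hn : 2 ≤ n) :
    completeColoringNumber (pathGraph n) = achromaticNumber (pathGraph n) := by
  set Sc := {k | ∃ c : Fin (n + 1) → Fin k, IsCompleteColoring (pathGraph n) k c} with hSc
  set Sp := {k | ∃ c : Fin (n + 1) → Fin k, IsCompleteProperColoring (pathGraph n) k c} with hSp
  have hsub : Sp ⊆ Sc := fun k ⟨c, hc⟩ => ⟨c, hc.1⟩
  -- the explicit 2-coloring 0,1,0,1,...
  have h2p : 2 ∈ Sp := by
    refine ⟨fun v => ⟨(v : ℕ) % 2, by omega⟩, ?_, ?_⟩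
    · intro i j hij
      have hiv : (i : ℕ) < 2 := i.isLt
      have hjv : (j : ℕ) < 2 := j.isLt
      have hne : (i : ℕ) ≠ (j : ℕ) := fun h => hij (Fin.ext h)
      rcases (by omega : (i : ℕ) = 0 ∨ (i : ℕ) = 1) with hi0 | hi1
      · refine ⟨⟨0, by omega⟩, ⟨1, by omega⟩, Or.inl rfl, ?_, ?_⟩
        · apply Fin.ext; simpa using hi0.symm
        · apply Fin.ext; simp; omega
      · refine ⟨⟨1, by omega⟩, ⟨0, by omega⟩, Or.inr rfl, ?_, ?_⟩
        · apply Fin.ext; simpa using hi1.symm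
        · apply Fin.ext; simp; omega
    · intro u v hadj heq
      have := congrArg Fin.val heq
      simp only [] at this
      rcases hadj with h | h <;> omega
  have h2c : 2 ∈ Sc := hsub h2p
  -- boundedness
  have hbound : ∀ k ∈ Sc, k ≤ n + 1 := by
    rintro k ⟨c, hc⟩
    by_cases hk : 2 ≤ k
    · have hsurj : Function.Surjective c := by
        intro i
        have hiv : (i : ℕ) < k := i.isLt
        set j : Fin k := ⟨if (i : ℕ) = 0 then 1 else 0, by split <;> omega⟩ with hj
        have hij : i ≠ j := by
          intro h
          have := congrArg Fin.val h
          rw [hj] at this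
          simp at this
          split at this <;> omega
        obtain ⟨u, v, -, hcu, -⟩ := hc i j hij
        exact ⟨u, hcu⟩
      have := Fintype.card_le_of_surjective c hsurj
      simpa using this
    · omega
  have hbddc : BddAbove Sc := ⟨n + 1, hbound⟩
  have hbddp : BddAbove Sp := ⟨n + 1, fun k hk => hbound k (hsub hk)⟩
  apply le_antisymm
  · apply csSup_le ⟨2, h2c⟩
    rintro k ⟨c, hc⟩
    by_cases hk : 2 ≤ k
    · obtain ⟨c', hc'⟩ := main_construction hk c hc
      exact le_csSup hbddp ⟨c', hc'⟩
    · exact le_trans (by omega) (le_csSup hbddp h2p)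
  · apply csSup_le ⟨2, h2p⟩
    intro k hk
    exact le_csSup hbddc (hsub hk)
end

section
/- Let k ≥ 2 and set M = 3k/2 if k is even and M = (3k−1)/2 if k is odd. Then there exists a coloring c : V(P_M) → {1,…,k+1} of the path P_M such that for every color i ∈ {1,…,k} there is an edge {u,v} of P_M with c(u) = i and c(v) = k+1. -/
/-- For `k ≥ 2` and `M = 3k/2` (`k` even) or `M = (3k−1)/2` (`k` odd), there is
a coloring of `P_M` with colors `{1, …, k+1}` (here `Fin (k+1)`, the last color
playing the role of `k+1`) realizing every pair `(i, k+1)` with `i ∈ {1, …, k}`. -/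
theorem path_extension_coloring (k : ℕ) (hk : 2 ≤ k)
    (M : ℕ) (hM : M = if Even k then 3 * k / 2 else (3 * k - 1) / 2) :
    ∃ c : Fin (M + 1) → Fin (k + 1),
      ∀ i : Fin (k + 1), i ≠ Fin.last k →
        ∃ u v, (pathGraph M).Adj u v ∧ c u = i ∧ c v = Fin.last k := by
  have hMeq : (Even k ∧ M = 3 * k / 2) ∨ (¬ Even k ∧ M = (3 * k - 1) / 2) := by
    by_cases h : Even k <;> simp [h] at hM <;> tauto
  have hkM : ∀ i : ℕ, i < k → 3 * (i / 2) + i % 2 * 2 ≤ M ∧ 3 * (i / 2) + 1 ≤ M := by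
    intro i hi
    rcases hMeq with ⟨⟨m, hm⟩, hMv⟩ | ⟨h, hMv⟩
    · omega
    · have : Odd k := Nat.not_even_iff_odd.mp h
      obtain ⟨m, hm⟩ := this
      omega
  refine ⟨fun j => if (j : ℕ) % 3 = 1 then Fin.last k
    else ⟨min k (2 * ((j : ℕ) / 3) + (j : ℕ) % 3 / 2), by omega⟩, ?_⟩
  intro i hi
  have hik : (i : ℕ) < k := by
    have h1 := i.isLt
    rcases Nat.lt_or_ge (i : ℕ) k with h | h
    · exact h
    · exact absurd (Fin.ext (by simp [Fin.last]; omega)) hi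
  obtain ⟨hu, hv⟩ := hkM i hik
  refine ⟨⟨3 * ((i : ℕ) / 2) + (i : ℕ) % 2 * 2, by omega⟩,
         ⟨3 * ((i : ℕ) / 2) + 1, by omega⟩, ?_, ?_, ?_⟩
  · simp only [pathGraph, Fin.val_mk]
    omega
  · have hmod : (3 * ((i : ℕ) / 2) + (i : ℕ) % 2 * 2) % 3 ≠ 1 := by omega
    simp only []
    rw [if_neg hmod]
    apply Fin.ext
    show min k _ = (i : ℕ)
    omega
  · have hmod : (3 * ((i : ℕ) / 2) + 1) % 3 = 1 := by omega
    simp only []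
    rw [if_pos hmod]
end

section
/- For every integer m ≥ 4, the achromatic number of the Roichman Rectangle R_m satisfies 8(m−2) ≤ Ψ(R_m) ≤ 8m−10. -/
def rr_ee (q j : ℕ) : ℕ :=
  if j < (q-1)/2 then 2*q+5+4*j
  else if j < 2*((q-1)/2) then 2*q+6+4*(j-(q-1)/2)
  else 1

def rr_EE (q : ℕ) : ℕ → ℕ
  | 0 => 0
  | j+1 => rr_EE q j + rr_ee q j

def rr_col (q i j : ℕ) : ℕ := i/2 + rr_EE q j + (i % 2) * (2 + 2*j)

lemma rr_ee_pos (q j : ℕ) : 1 ≤ rr_ee q j := by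
  unfold rr_ee; split_ifs <;> omega

lemma rr_ee_lt (q j : ℕ) (hq : 2 ≤ q) : rr_ee q j + 2 < 8*q := by
  unfold rr_ee; split_ifs <;> omega

lemma rr_ee_eq1 (q j : ℕ) (h : j < (q-1)/2) : rr_ee q j = 2*q+5+4*j := by
  unfold rr_ee; rw [if_pos h]

lemma rr_ee_eq2 (q j : ℕ) (h1 : (q-1)/2 ≤ j) (h2 : j < 2*((q-1)/2)) :
    rr_ee q j = 2*q+6+4*(j-(q-1)/2) := by
  unfold rr_ee; rw [if_neg (by omega), if_pos h2]

lemma rr_col_even (q t j : ℕ) : rr_col q (2*t) j = t + rr_EE q j := by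
  unfold rr_col
  rw [show 2*t/2 = t by omega, show 2*t % 2 = 0 by omega]
  ring

lemma rr_col_odd (q t j : ℕ) : rr_col q (2*t+1) j = t + rr_EE q j + (2+2*j) := by
  unfold rr_col
  rw [show (2*t+1)/2 = t by omega, show (2*t+1) % 2 = 1 by omega]
  ring

lemma rr_col_succ (q i j : ℕ) :
    rr_col q i (j+1) = rr_col q i j + rr_ee q j + (i % 2) * 2 := by
  unfold rr_col
  show i/2 + (rr_EE q j + rr_ee q j) + (i % 2) * (2 + 2*(j+1)) = _
  ring

lemma rr_mod_ne (a d n : ℕ) (h1 : 0 < d) (h2 : d < n) : (a + d) % n ≠ a % n := by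
  intro h
  have h3 : a % n = (a + d) % n := h.symm
  have h4 : n ∣ (a + d) - a := (Nat.modEq_iff_dvd' (Nat.le_add_right a d)).mp h3
  rw [Nat.add_sub_cancel_left] at h4
  exact absurd (Nat.le_of_dvd h1 h4) (by omega)

lemma rr_exists_start (n s a : ℕ) (hn : 0 < n) (ha : a < n) :
    ∃ t, t < n ∧ (t + s) % n = a := by
  have hr : s % n < n := Nat.mod_lt _ hn
  refine ⟨(a + (n - s % n)) % n, Nat.mod_lt _ hn, ?_⟩
  calc ((a + (n - s % n)) % n + s) % n
      = (a + (n - s % n) + s) % n := Nat.mod_add_mod _ _ _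
    _ = (a + (n - s % n) + s % n) % n :=
        (Nat.ModEq.add_left (a + (n - s % n)) (Nat.mod_modEq s n)).symm
    _ = (a + n) % n := by rw [show a + (n - s % n) + s % n = a + n by omega]
    _ = a % n := Nat.add_mod_right a n
    _ = a := Nat.mod_eq_of_lt ha

lemma rr_horiz_ne (q i j : ℕ) (hq : 2 ≤ q) :
    rr_col q i (j+1) % (8*q) ≠ rr_col q i j % (8*q) := by
  rw [rr_col_succ]
  have h1 := rr_ee_pos q j
  have h2 := rr_ee_lt q j hq
  rw [show rr_col q i j + rr_ee q j + (i % 2) * 2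
      = rr_col q i j + (rr_ee q j + (i % 2) * 2) by ring]
  exact rr_mod_ne _ _ _ (by omega) (by omega)

lemma rr_vert_ne (q i j : ℕ) (hq : 2 ≤ q) (hj : j ≤ q+1) :
    rr_col q (i+1) j % (8*q) ≠ rr_col q i j % (8*q) := by
  obtain ⟨t, ht | ht⟩ : ∃ t, i = 2*t ∨ i = 2*t+1 := ⟨i/2, by omega⟩
  · subst ht
    rw [show 2*t+1 = 2*t+1 from rfl, rr_col_odd, rr_col_even]
    rw [show t + rr_EE q j + (2+2*j) = (t + rr_EE q j) + (2*j+2) by ring]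
    exact rr_mod_ne _ _ _ (by omega) (by omega)
  · subst ht
    rw [show 2*t+1+1 = 2*(t+1) by ring, rr_col_even, rr_col_odd]
    rw [show t + rr_EE q j + (2+2*j) = (t+1 + rr_EE q j) + (2*j+1) by ring]
    exact (rr_mod_ne _ _ _ (by omega) (by omega)).symm


def rrMech (q x : ℕ) : Prop :=
  (∃ j, j ≤ q+1 ∧ x = 2*j+2) ∨ (∃ j, j ≤ q+1 ∧ x + (2*j+1) = 8*q) ∨
  (∃ j, j ≤ q ∧ (x = rr_ee q j ∨ x = rr_ee q j + 2))

lemma rr_realize (q : ℕ) (hq : 2 ≤ q) (a b δ : ℕ) (ha : a < 8*q) (hb : b < 8*q)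
    (hab : (a + δ) % (8*q) = b) (hm : rrMech q δ) :
    ∃ u v : Fin (16*q+2) × Fin (q+2), (gridGraph (16*q+2) (q+2)).Adj u v ∧
      rr_col q u.1.1 u.2.1 % (8*q) = a ∧ rr_col q v.1.1 v.2.1 % (8*q) = b := by
  have hk : 0 < 8*q := by omega
  rcases hm with ⟨j, hj, rfl⟩ | ⟨j, hj, hδ⟩ | ⟨j, hj, hδ | hδ⟩
  · -- vertical, even gap: δ = 2j+2
    obtain ⟨t, ht, hta⟩ := rr_exists_start (8*q) (rr_EE q j) a hk ha
    refine ⟨(⟨2*t, by omega⟩, ⟨j, by omega⟩), (⟨2*t+1, by omega⟩, ⟨j, by omega⟩),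
      Or.inr ⟨rfl, Or.inl rfl⟩, ?_, ?_⟩
    · show rr_col q (2*t) j % (8*q) = a
      rw [rr_col_even]; exact hta
    · show rr_col q (2*t+1) j % (8*q) = b
      rw [rr_col_odd, show t + rr_EE q j + (2+2*j) = t + rr_EE q j + (2*j+2) by ring,
        ← Nat.mod_add_mod, hta]
      exact hab
  · -- vertical, odd gap: δ = 8q - (2j+1)
    obtain ⟨t, ht, htb⟩ := rr_exists_start (8*q) (rr_EE q j + 1) b hk hb
    refine ⟨(⟨2*t+1, by omega⟩, ⟨j, by omega⟩), (⟨2*t+2, by omega⟩, ⟨j, by omega⟩),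
      Or.inr ⟨rfl, Or.inl rfl⟩, ?_, ?_⟩
    · show rr_col q (2*t+1) j % (8*q) = a
      rw [rr_col_odd,
        show t + rr_EE q j + (2+2*j) = t + (rr_EE q j + 1) + (2*j+1) by ring,
        ← Nat.mod_add_mod, htb, ← hab, Nat.mod_add_mod,
        show a + δ + (2*j+1) = a + 8*q by omega, Nat.add_mod_right,
        Nat.mod_eq_of_lt ha]
    · show rr_col q (2*t+2) j % (8*q) = b
      rw [show 2*t+2 = 2*(t+1) by ring, rr_col_even,
        show t+1 + rr_EE q j = t + (rr_EE q j + 1) by ring]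
      exact htb
  · -- horizontal, even row: δ = ee q j
    obtain ⟨t, ht, hta⟩ := rr_exists_start (8*q) (rr_EE q j) a hk ha
    refine ⟨(⟨2*t, by omega⟩, ⟨j, by omega⟩), (⟨2*t, by omega⟩, ⟨j+1, by omega⟩),
      Or.inl ⟨rfl, Or.inl rfl⟩, ?_, ?_⟩
    · show rr_col q (2*t) j % (8*q) = a
      rw [rr_col_even]; exact hta
    · show rr_col q (2*t) (j+1) % (8*q) = b
      rw [rr_col_succ, show (2*t) % 2 = 0 by omega, rr_col_even,
        show t + rr_EE q j + rr_ee q j + 0*2 = t + rr_EE q j + δ by rw [hδ]; ring,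
        ← Nat.mod_add_mod, hta]
      exact hab
  · -- horizontal, odd row: δ = ee q j + 2
    obtain ⟨t, ht, hta⟩ := rr_exists_start (8*q) (rr_EE q j + (2+2*j)) a hk ha
    refine ⟨(⟨2*t+1, by omega⟩, ⟨j, by omega⟩), (⟨2*t+1, by omega⟩, ⟨j+1, by omega⟩),
      Or.inl ⟨rfl, Or.inl rfl⟩, ?_, ?_⟩
    · show rr_col q (2*t+1) j % (8*q) = a
      rw [rr_col_odd, show t + rr_EE q j + (2+2*j) = t + (rr_EE q j + (2+2*j)) by ring]
      exact hta
    · show rr_col q (2*t+1) (j+1) % (8*q) = b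
      rw [rr_col_succ, show (2*t+1) % 2 = 1 by omega, rr_col_odd,
        show t + rr_EE q j + (2+2*j) + rr_ee q j + 1*2
          = t + (rr_EE q j + (2+2*j)) + δ by rw [hδ]; ring,
        ← Nat.mod_add_mod, hta]
      exact hab

lemma rr_cover (q δ : ℕ) (hq : 2 ≤ q) (h1 : 0 < δ) (h2 : δ < 8*q) :
    rrMech q δ ∨ rrMech q (8*q - δ) := by
  unfold rrMech
  by_cases hpar : δ % 2 = 0
  · by_cases hc1 : δ ≤ 2*q+4
    · exact Or.inl (Or.inl ⟨(δ-2)/2, by omega, by omega⟩)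
    · by_cases hc2 : 8*q - δ ≤ 2*q+4
      · exact Or.inr (Or.inl ⟨(8*q-δ-2)/2, by omega, by omega⟩)
      · by_cases hc3 : δ ≤ 4*q
        · refine Or.inl (Or.inr (Or.inr ?_))
          by_cases h4 : (δ - (2*q+6)) % 4 = 0
          · refine ⟨(q-1)/2 + (δ-(2*q+6))/4, by omega, Or.inl ?_⟩
            rw [rr_ee_eq2 _ _ (by omega) (by omega)]; omega
          · refine ⟨(q-1)/2 + (δ-(2*q+8))/4, by omega, Or.inr ?_⟩
            rw [rr_ee_eq2 _ _ (by omega) (by omega)]; omega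
        · refine Or.inr (Or.inr (Or.inr ?_))
          by_cases h4 : ((8*q-δ) - (2*q+6)) % 4 = 0
          · refine ⟨(q-1)/2 + ((8*q-δ)-(2*q+6))/4, by omega, Or.inl ?_⟩
            rw [rr_ee_eq2 _ _ (by omega) (by omega)]; omega
          · refine ⟨(q-1)/2 + ((8*q-δ)-(2*q+8))/4, by omega, Or.inr ?_⟩
            rw [rr_ee_eq2 _ _ (by omega) (by omega)]; omega
  · by_cases hc1 : δ ≤ 2*q+3
    · exact Or.inr (Or.inr (Or.inl ⟨(δ-1)/2, by omega, by omega⟩))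
    · by_cases hc2 : 8*q - δ ≤ 2*q+3
      · exact Or.inl (Or.inr (Or.inl ⟨(8*q-δ-1)/2, by omega, by omega⟩))
      · by_cases hc3 : δ ≤ 4*q
        · refine Or.inl (Or.inr (Or.inr ?_))
          by_cases h4 : (δ - (2*q+5)) % 4 = 0
          · refine ⟨(δ-(2*q+5))/4, by omega, Or.inl ?_⟩
            rw [rr_ee_eq1 _ _ (by omega)]; omega
          · refine ⟨(δ-(2*q+7))/4, by omega, Or.inr ?_⟩
            rw [rr_ee_eq1 _ _ (by omega)]; omega
        · refine Or.inr (Or.inr (Or.inr ?_))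
          by_cases h4 : ((8*q-δ) - (2*q+5)) % 4 = 0
          · refine ⟨((8*q-δ)-(2*q+5))/4, by omega, Or.inl ?_⟩
            rw [rr_ee_eq1 _ _ (by omega)]; omega
          · refine ⟨((8*q-δ)-(2*q+7))/4, by omega, Or.inr ?_⟩
            rw [rr_ee_eq1 _ _ (by omega)]; omega


lemma rr_construction (q : ℕ) (hq : 2 ≤ q) :
    ∃ c : Fin (16*q+2) × Fin (q+2) → Fin (8*q),
      IsCompleteProperColoring (gridGraph (16*q+2) (q+2)) (8*q) c := by
  have hk : 0 < 8*q := by omega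
  refine ⟨fun p => ⟨rr_col q p.1.1 p.2.1 % (8*q), Nat.mod_lt _ hk⟩, ?_, ?_⟩
  · -- completeness
    intro i j hij
    have hiv : (i:ℕ) < 8*q := i.isLt
    have hjv : (j:ℕ) < 8*q := j.isLt
    set δ := ((j:ℕ) + 8*q - i) % (8*q) with hδdef
    have hδ2 : δ < 8*q := Nat.mod_lt _ hk
    have hsum : ((i:ℕ) + δ) % (8*q) = j := by
      rw [hδdef, Nat.add_mod_mod, show (i:ℕ) + ((j:ℕ) + 8*q - i) = (j:ℕ) + 8*q by omega,
        Nat.add_mod_right, Nat.mod_eq_of_lt hjv]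
    have hδ1 : 0 < δ := by
      rcases Nat.eq_zero_or_pos δ with h | h
      · exfalso
        rw [h, Nat.add_zero, Nat.mod_eq_of_lt hiv] at hsum
        exact hij (Fin.ext hsum)
      · exact h
    rcases rr_cover q δ hq hδ1 hδ2 with hM | hM
    · obtain ⟨u, v, hadj, hu, hv⟩ := rr_realize q hq i j δ hiv hjv hsum hM
      exact ⟨u, v, hadj, Fin.ext hu, Fin.ext hv⟩
    · have hrev : ((j:ℕ) + (8*q - δ)) % (8*q) = i := by
        conv_lhs => rw [← hsum]
        rw [Nat.mod_add_mod, show (i:ℕ) + δ + (8*q - δ) = (i:ℕ) + 8*q by omega,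
          Nat.add_mod_right, Nat.mod_eq_of_lt hiv]
      obtain ⟨u, v, hadj, hu, hv⟩ := rr_realize q hq j i (8*q-δ) hjv hiv hrev hM
      exact ⟨v, u, hadj.symm, Fin.ext hv, Fin.ext hu⟩
  · -- properness
    intro u v hadj hEq
    have hval : rr_col q u.1.1 u.2.1 % (8*q) = rr_col q v.1.1 v.2.1 % (8*q) :=
      congrArg Fin.val hEq
    rcases hadj with ⟨h1, h2 | h2⟩ | ⟨h1, h2 | h2⟩
    · have hr : (u.1 : ℕ) = v.1 := congrArg Fin.val h1
      rw [← hr, show (v.2 : ℕ) = u.2.1 + 1 by omega] at hval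
      exact rr_horiz_ne q u.1.1 u.2.1 hq hval.symm
    · have hr : (u.1 : ℕ) = v.1 := congrArg Fin.val h1
      rw [← hr, show (u.2 : ℕ) = v.2.1 + 1 by omega] at hval
      exact rr_horiz_ne q u.1.1 v.2.1 hq hval
    · have hr : (u.2 : ℕ) = v.2 := congrArg Fin.val h1
      rw [← hr, show (v.1 : ℕ) = u.1.1 + 1 by omega] at hval
      have hj : (u.2 : ℕ) ≤ q+1 := by have := u.2.isLt; omega
      exact rr_vert_ne q u.1.1 u.2.1 hq hj hval.symm
    · have hr : (u.2 : ℕ) = v.2 := congrArg Fin.val h1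
      rw [← hr, show (u.1 : ℕ) = v.1.1 + 1 by omega] at hval
      have hj : (u.2 : ℕ) ≤ q+1 := by have := u.2.isLt; omega
      exact rr_vert_ne q v.1.1 u.2.1 hq hj hval

def rrEnc (N m : ℕ) (hN : 2 ≤ N) (hm : 2 ≤ m)
    (uv : (Fin N × Fin m) × (Fin N × Fin m)) :
    ((Fin N × Fin (m-1)) ⊕ (Fin (N-1) × Fin m)) × Bool :=
  if h1 : (uv.1.2 : ℕ) + 1 = uv.2.2 then
    (Sum.inl (uv.1.1, ⟨uv.1.2, by have := uv.2.2.isLt; omega⟩), true)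
  else if h2 : (uv.2.2 : ℕ) + 1 = uv.1.2 then
    (Sum.inl (uv.1.1, ⟨uv.2.2, by have := uv.1.2.isLt; omega⟩), false)
  else if h3 : (uv.1.1 : ℕ) + 1 = uv.2.1 then
    (Sum.inr (⟨uv.1.1, by have := uv.2.1.isLt; omega⟩, uv.1.2), true)
  else if h4 : (uv.2.1 : ℕ) + 1 = uv.1.1 then
    (Sum.inr (⟨uv.2.1, by have := uv.1.1.isLt; omega⟩, uv.2.2), false)
  else (Sum.inl (⟨0, by omega⟩, ⟨0, by omega⟩), true)

def rrDec (N m : ℕ) (e : ((Fin N × Fin (m-1)) ⊕ (Fin (N-1) × Fin m)) × Bool) :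
    (Fin N × Fin m) × (Fin N × Fin m) :=
  match e with
  | (Sum.inl (r, c0), true) =>
      ((r, ⟨c0.1, by have := c0.isLt; omega⟩), (r, ⟨c0.1+1, by have := c0.isLt; omega⟩))
  | (Sum.inl (r, c0), false) =>
      ((r, ⟨c0.1+1, by have := c0.isLt; omega⟩), (r, ⟨c0.1, by have := c0.isLt; omega⟩))
  | (Sum.inr (r0, cc), true) =>
      ((⟨r0.1, by have := r0.isLt; omega⟩, cc), (⟨r0.1+1, by have := r0.isLt; omega⟩, cc))
  | (Sum.inr (r0, cc), false) =>
      ((⟨r0.1+1, by have := r0.isLt; omega⟩, cc), (⟨r0.1, by have := r0.isLt; omega⟩, cc))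

lemma rr_dec_enc (N m : ℕ) (hN : 2 ≤ N) (hm : 2 ≤ m)
    (uv : (Fin N × Fin m) × (Fin N × Fin m))
    (h : (gridGraph N m).Adj uv.1 uv.2) : rrDec N m (rrEnc N m hN hm uv) = uv := by
  obtain ⟨⟨u1, u2⟩, ⟨v1, v2⟩⟩ := uv
  rcases h with ⟨h1, h2 | h2⟩ | ⟨h1, h2 | h2⟩ <;> simp only at h1 h2
  · unfold rrEnc
    rw [dif_pos h2]
    unfold rrDec
    simp only [Prod.mk.injEq, Fin.ext_iff, Fin.val_mk]
    exact ⟨trivial, congrArg Fin.val h1, h2⟩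
  · have hn1 : ¬((u2:ℕ) + 1 = (v2:ℕ)) := by omega
    unfold rrEnc
    rw [dif_neg hn1, dif_pos h2]
    unfold rrDec
    simp only [Prod.mk.injEq, Fin.ext_iff, Fin.val_mk]
    exact ⟨⟨trivial, h2⟩, congrArg Fin.val h1, trivial⟩
  · have hv : (u2:ℕ) = v2 := congrArg Fin.val h1
    have hn1 : ¬((u2:ℕ) + 1 = (v2:ℕ)) := by omega
    have hn2 : ¬((v2:ℕ) + 1 = (u2:ℕ)) := by omega
    unfold rrEnc
    rw [dif_neg hn1, dif_neg hn2, dif_pos h2]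
    unfold rrDec
    simp only [Prod.mk.injEq, Fin.ext_iff, Fin.val_mk]
    exact ⟨trivial, h2, hv⟩
  · have hv : (u2:ℕ) = v2 := congrArg Fin.val h1
    have hn1 : ¬((u2:ℕ) + 1 = (v2:ℕ)) := by omega
    have hn2 : ¬((v2:ℕ) + 1 = (u2:ℕ)) := by omega
    have hn3 : ¬((u1:ℕ) + 1 = (v1:ℕ)) := by omega
    unfold rrEnc
    rw [dif_neg hn1, dif_neg hn2, dif_neg hn3, dif_pos h2]
    unfold rrDec
    simp only [Prod.mk.injEq, Fin.ext_iff, Fin.val_mk]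
    exact ⟨⟨h2, hv.symm⟩, trivial⟩

lemma rr_card_bound (N m k : ℕ) (hN : 2 ≤ N) (hm : 2 ≤ m)
    (c : Fin N × Fin m → Fin k) (hc : IsCompleteColoring (gridGraph N m) k c) :
    k * (k-1) ≤ 2 * (N*(m-1) + (N-1)*m) := by
  rcases k with _ | _ | n
  · simp
  · simp
  have hch : ∀ p : Fin (n+2) × Fin (n+1), ∃ uv : (Fin N × Fin m) × (Fin N × Fin m),
      (gridGraph N m).Adj uv.1 uv.2 ∧ c uv.1 = p.1 ∧ c uv.2 = p.1.succAbove p.2 := by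
    intro p
    obtain ⟨u, v, h⟩ := hc p.1 (p.1.succAbove p.2) (Fin.succAbove_ne p.1 p.2).symm
    exact ⟨(u, v), h⟩
  classical
  let F : Fin (n+2) × Fin (n+1) → ((Fin N × Fin (m-1)) ⊕ (Fin (N-1) × Fin m)) × Bool :=
    fun p => rrEnc N m hN hm (Classical.choose (hch p))
  have hF : Function.Injective F := by
    intro p p' hpp
    obtain ⟨ha1, ha2, ha3⟩ := Classical.choose_spec (hch p)
    obtain ⟨hb1, hb2, hb3⟩ := Classical.choose_spec (hch p')
    have hdec : Classical.choose (hch p) = Classical.choose (hch p') := by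
      have h := congrArg (rrDec N m) hpp
      rwa [rr_dec_enc N m hN hm _ ha1, rr_dec_enc N m hN hm _ hb1] at h
    have e1 : p.1 = p'.1 := by rw [← ha2, ← hb2, hdec]
    have e2 : p.1.succAbove p.2 = p'.1.succAbove p'.2 := by rw [← ha3, ← hb3, hdec]
    rw [← e1] at e2
    have e3 : p.2 = p'.2 := Fin.succAbove_right_injective e2
    exact Prod.ext e1 e3
  have hcard := Fintype.card_le_of_injective F hF
  simp only [Fintype.card_prod, Fintype.card_sum, Fintype.card_fin, Fintype.card_bool] at hcard
  show (n+2) * (n+2-1) ≤ 2 * (N*(m-1) + (N-1)*m)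
  calc (n+2) * (n+2-1) = (n+2) * (n+1) := rfl
    _ ≤ (N*(m-1) + (N-1)*m) * 2 := hcard
    _ = 2 * (N*(m-1) + (N-1)*m) := mul_comm _ _

/-- For `m ≥ 4` and `N = 16(m−2)+2`, the Roichman Rectangle (the `N×m` grid)
satisfies `8(m−2) ≤ Ψ(R_m) ≤ 8m − 10`. -/
theorem achromatic_roichman_rectangle (m : ℕ) (hm : 4 ≤ m) (N : ℕ)
    (hN : N = 16 * (m - 2) + 2) :
    8 * (m - 2) ≤ achromaticNumber (gridGraph N m) ∧
    achromaticNumber (gridGraph N m) ≤ 8 * m - 10 := by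
  obtain ⟨q, rfl⟩ : ∃ q, m = q + 2 := ⟨m - 2, by omega⟩
  have hq : 2 ≤ q := by omega
  have hN' : N = 16*q + 2 := by omega
  subst hN'
  rw [show q + 2 - 2 = q from by omega]
  have hub : ∀ k ∈ {k | ∃ c : Fin (16*q+2) × Fin (q+2) → Fin k,
      IsCompleteProperColoring (gridGraph (16*q+2) (q+2)) k c}, k ≤ 8*(q+2) - 10 := by
    rintro k ⟨c, hc⟩
    have hcb := rr_card_bound (16*q+2) (q+2) k (by omega) (by omega) c hc.1
    by_contra hk
    push_neg at hk
    have h1 : (8*q+7) * (8*q+6) ≤ k * (k-1) := Nat.mul_le_mul (by omega) (by omega)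
    have h2 := h1.trans hcb
    have e1 : (8*q+7) * (8*q+6) = 64*(q*q) + 104*q + 42 := by ring
    have e2 : 2 * ((16*q+2)*((q+2)-1) + ((16*q+2)-1)*(q+2)) = 64*(q*q) + 102*q + 8 := by
      rw [show (q+2)-1 = q+1 from by omega, show (16*q+2)-1 = 16*q+1 from by omega]
      ring
    rw [e1, e2] at h2
    linarith
  constructor
  · unfold achromaticNumber
    refine le_csSup ⟨8*(q+2) - 10, hub⟩ ?_
    obtain ⟨c, hc⟩ := rr_construction q hq
    exact ⟨c, hc⟩
  · unfold achromaticNumber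
    exact csSup_le' hub
end

section
/- For every integer m ≥ 3, the complete coloring number of the Modified Roichman Rectangle R̄_m satisfies 8m−7 ≤ Γ(R̄_m) ≤ 8m−6. -/
namespace MRR

def DD (q j : ℕ) : ℕ := if j + 1 = q then 4*q - 2 else if j = q then 4*q else 4*j + 3 - q % 2

def sg (q j : ℕ) : ℕ := if j % 2 = 0 then 4*j + 1 + 2*(q % 2) else 4*j

def off (q : ℕ) : ℕ → ZMod (8*q+1)
  | 0 => 0
  | j+1 => off q j + (if j + 1 = q then ((4*q : ℕ) : ZMod (8*q+1)) else ((sg q j : ℕ) : ZMod (8*q+1)))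

instance (q : ℕ) : NeZero (8*q+1) := ⟨by omega⟩

def PP (q i : ℕ) : ZMod (8*q+1) × ZMod (8*q+1) :=
  if i < 2*q then
    (if i % 2 = 0 then (off q (i/2) - 1, off q (i/2) - 1 + ((DD q (i/2) : ℕ) : ZMod (8*q+1)))
     else (off q (i/2), off q (i/2) + ((DD q (i/2) : ℕ) : ZMod (8*q+1)) - 1))
  else if i < 3*q - 1 then
    (off q (i - 2*q) + ((DD q (i-2*q) : ℕ) : ZMod (8*q+1)) - 1,
     off q (i - 2*q + 1) + ((DD q (i-2*q+1) : ℕ) : ZMod (8*q+1)) - 1)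
  else if i = 3*q - 1 then (off q (q-1) - 1, off q (q-1) - 1 + ((4*q : ℕ) : ZMod (8*q+1)))
  else if i = 3*q then (off q (q-1) + ((4*q-1 : ℕ) : ZMod (8*q+1)), off q (q-1) + ((8*q-2 : ℕ) : ZMod (8*q+1)))
  else if i = 3*q + 1 then (off q (q-1) + ((4*q : ℕ) : ZMod (8*q+1)), off q (q-1) + ((8*q-1 : ℕ) : ZMod (8*q+1)))
  else (0, 0)

def ww (q j r : ℕ) : ZMod (8*q+1) :=
  if j = q ∧ 8*q < r then
    (if (r - (8*q+1)) % 2 = 0 then (PP q ((r - (8*q+1))/2)).1 else (PP q ((r - (8*q+1))/2)).2)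
  else off q j + ((r/2 : ℕ) : ZMod (8*q+1)) + (if r % 2 = 1 then ((DD q j : ℕ) : ZMod (8*q+1)) else 0)

lemma e8q (q : ℕ) : ((8*q : ℕ) : ZMod (8*q+1)) = -1 := by
  have h := ZMod.natCast_self (8*q+1)
  push_cast at h ⊢
  linear_combination h

lemma valcast (q : ℕ) (x : ZMod (8*q+1)) : ((x.val : ℕ) : ZMod (8*q+1)) = x :=
  ZMod.natCast_rightInverse x

lemma off_succ (q j : ℕ) (h : j + 1 ≠ q) :
    off q (j+1) = off q j + ((sg q j : ℕ) : ZMod (8*q+1)) := by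
  rw [off, if_neg h]

lemma off_last (q : ℕ) (hq : 1 ≤ q) :
    off q q = off q (q-1) + ((4*q : ℕ) : ZMod (8*q+1)) := by
  obtain ⟨j, rfl⟩ : ∃ j, q = j + 1 := ⟨q - 1, by omega⟩
  rw [off, if_pos rfl]
  simp

lemma ww_even (q j t : ℕ) (h : ¬(j = q ∧ 8*q < 2*t)) : ww q j (2*t) = off q j + (t : ZMod (8*q+1)) := by
  unfold ww
  rw [if_neg h]
  simp [Nat.mul_div_cancel_left, Nat.mul_mod_right]

lemma ww_odd (q j t : ℕ) (h : ¬(j = q ∧ 8*q < 2*t+1)) :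
    ww q j (2*t+1) = off q j + (t : ZMod (8*q+1)) + ((DD q j : ℕ) : ZMod (8*q+1)) := by
  unfold ww
  rw [if_neg h]
  have h1 : (2*t+1) / 2 = t := by omega
  have h2 : (2*t+1) % 2 = 1 := by omega
  rw [h1, h2]
  simp

lemma ww_patch1 (q i : ℕ) : ww q q (8*q + (2*i+1)) = (PP q i).1 := by
  unfold ww
  rw [if_pos ⟨rfl, by omega⟩]
  have h1 : 8*q + (2*i+1) - (8*q+1) = 2*i := by omega
  rw [h1]
  simp [Nat.mul_div_cancel_left, Nat.mul_mod_right]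

lemma ww_patch2 (q i : ℕ) : ww q q (8*q + (2*i+2)) = (PP q i).2 := by
  unfold ww
  rw [if_pos ⟨rfl, by omega⟩]
  have h1 : 8*q + (2*i+2) - (8*q+1) = 2*i+1 := by omega
  rw [h1]
  have h2 : (2*i+1) % 2 = 1 := by omega
  have h3 : (2*i+1) / 2 = i := by omega
  rw [h2, h3]
  simp

/-- a pair of colors `{a,b}` is realized on some edge of the grid. -/
def cov (q : ℕ) (a b : ZMod (8*q+1)) : Prop :=
  ∃ r₁ j₁ r₂ j₂ : ℕ, r₁ < 16*q+1 ∧ r₂ < 16*q+1 ∧ j₁ < q+1 ∧ j₂ < q+1 ∧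
    ((j₁ = j₂ ∧ (r₂ = r₁+1 ∨ r₁ = r₂+1)) ∨ (r₁ = r₂ ∧ (j₂ = j₁+1 ∨ j₁ = j₂+1))) ∧
    ww q j₁ r₁ = a ∧ ww q j₂ r₂ = b

lemma PP_colup (q j : ℕ) (hj : j < q) :
    PP q (2*j) = (off q j - 1, off q j - 1 + ((DD q j : ℕ) : ZMod (8*q+1))) := by
  unfold PP
  rw [if_pos (by omega)]
  simp [Nat.mul_div_cancel_left, Nat.mul_mod_right]

lemma PP_coldown (q j : ℕ) (hj : j < q) :
    PP q (2*j+1) = (off q j, off q j + ((DD q j : ℕ) : ZMod (8*q+1)) - 1) := by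
  unfold PP
  rw [if_pos (by omega)]
  have h2 : (2*j+1) % 2 = 1 := by omega
  have h3 : (2*j+1) / 2 = j := by omega
  rw [h2, h3]
  simp

lemma PP_tau (q j : ℕ) (hj : j + 2 ≤ q) :
    PP q (2*q + j) = (off q j + ((DD q j : ℕ) : ZMod (8*q+1)) - 1,
      off q (j+1) + ((DD q (j+1) : ℕ) : ZMod (8*q+1)) - 1) := by
  unfold PP
  rw [if_neg (by omega), if_pos (by omega)]
  have h1 : 2*q + j - 2*q = j := by omega
  rw [h1]

lemma PP_seam1 (q : ℕ) (hq : 1 ≤ q) :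
    PP q (3*q - 1) = (off q (q-1) - 1, off q (q-1) - 1 + ((4*q : ℕ) : ZMod (8*q+1))) := by
  unfold PP
  rw [if_neg (by omega), if_neg (by omega), if_pos rfl]

lemma PP_seam2 (q : ℕ) (hq : 1 ≤ q) :
    PP q (3*q) = (off q (q-1) + ((4*q-1 : ℕ) : ZMod (8*q+1)), off q (q-1) + ((8*q-2 : ℕ) : ZMod (8*q+1))) := by
  unfold PP
  rw [if_neg (by omega), if_neg (by omega), if_neg (by omega), if_pos rfl]

lemma PP_seam3 (q : ℕ) (hq : 1 ≤ q) :
    PP q (3*q+1) = (off q (q-1) + ((4*q : ℕ) : ZMod (8*q+1)), off q (q-1) + ((8*q-1 : ℕ) : ZMod (8*q+1))) := by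
  unfold PP
  rw [if_neg (by omega), if_neg (by omega), if_neg (by omega), if_neg (by omega), if_pos rfl]


lemma S1 (q : ℕ) (j : ℕ) (hj : j + 1 ≤ q) (x : ZMod (8*q+1)) :
    cov q x (x + ((DD q j : ℕ) : ZMod (8*q+1))) := by
  set t := (x - off q j).val with ht
  have htlt : t < 8*q+1 := ZMod.val_lt _
  have hx : (t : ZMod (8*q+1)) = x - off q j := valcast q _
  by_cases hc : t < 8*q
  · refine ⟨2*t, j, 2*t+1, j, by omega, by omega, by omega, by omega,
      Or.inl ⟨rfl, Or.inl rfl⟩, ?_, ?_⟩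
    · rw [ww_even q j t (by omega)]
      linear_combination hx
    · rw [ww_odd q j t (by omega)]
      linear_combination hx
  · have ht8 : t = 8*q := by omega
    have hxval : x = off q j - 1 := by
      have : (t : ZMod (8*q+1)) = -1 := by rw [ht8]; exact e8q q
      rw [this] at hx
      linear_combination - hx
    refine ⟨8*q + (2*(2*j)+1), q, 8*q + (2*(2*j)+2), q, by omega, by omega, by omega, by omega,
      Or.inl ⟨rfl, Or.inl (by omega)⟩, ?_, ?_⟩
    · rw [ww_patch1, PP_colup q j (by omega), hxval]
    · rw [ww_patch2, PP_colup q j (by omega), hxval]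


lemma S2 (q : ℕ) (j : ℕ) (hj : j + 1 ≤ q) (x : ZMod (8*q+1)) :
    cov q x (x + ((DD q j : ℕ) : ZMod (8*q+1)) - 1) := by
  set t := (x - off q j - 1).val with ht
  have htlt : t < 8*q+1 := ZMod.val_lt _
  have hx : (t : ZMod (8*q+1)) = x - off q j - 1 := valcast q _
  by_cases hc : t < 8*q
  · refine ⟨2*(t+1), j, 2*t+1, j, by omega, by omega, by omega, by omega,
      Or.inl ⟨rfl, Or.inr (by omega)⟩, ?_, ?_⟩
    · rw [ww_even q j (t+1) (by omega)]
      push_cast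
      linear_combination hx
    · rw [ww_odd q j t (by omega)]
      linear_combination hx
  · have ht8 : t = 8*q := by omega
    have hxval : x = off q j := by
      have : (t : ZMod (8*q+1)) = -1 := by rw [ht8]; exact e8q q
      rw [this] at hx
      linear_combination - hx
    refine ⟨8*q + (2*(2*j+1)+1), q, 8*q + (2*(2*j+1)+2), q, by omega, by omega, by omega, by omega,
      Or.inl ⟨rfl, Or.inl (by omega)⟩, ?_, ?_⟩
    · rw [ww_patch1, PP_coldown q j (by omega), hxval]
    · rw [ww_patch2, PP_coldown q j (by omega), hxval]

lemma S3 (q : ℕ) (j : ℕ) (hj : j + 2 ≤ q) (x : ZMod (8*q+1)) :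
    cov q x (x + ((sg q j : ℕ) : ZMod (8*q+1))) := by
  set t := (x - off q j).val with ht
  have htlt : t < 8*q+1 := ZMod.val_lt _
  have hx : (t : ZMod (8*q+1)) = x - off q j := valcast q _
  refine ⟨2*t, j, 2*t, j+1, by omega, by omega, by omega, by omega,
    Or.inr ⟨rfl, Or.inl rfl⟩, ?_, ?_⟩
  · rw [ww_even q j t (by omega)]
    linear_combination hx
  · rw [ww_even q (j+1) t (by omega), off_succ q j (by omega)]
    linear_combination hx

lemma S4 (q : ℕ) (j : ℕ) (hj : j + 2 ≤ q) (x : ZMod (8*q+1)) :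
    cov q x (x + ((sg q j : ℕ) : ZMod (8*q+1)) + ((DD q (j+1) : ℕ) : ZMod (8*q+1))
      - ((DD q j : ℕ) : ZMod (8*q+1))) := by
  set t := (x - off q j - ((DD q j : ℕ) : ZMod (8*q+1))).val with ht
  have htlt : t < 8*q+1 := ZMod.val_lt _
  have hx : (t : ZMod (8*q+1)) = x - off q j - ((DD q j : ℕ) : ZMod (8*q+1)) := valcast q _
  by_cases hc : t < 8*q
  · refine ⟨2*t+1, j, 2*t+1, j+1, by omega, by omega, by omega, by omega,
      Or.inr ⟨rfl, Or.inl rfl⟩, ?_, ?_⟩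
    · rw [ww_odd q j t (by omega)]
      linear_combination hx
    · rw [ww_odd q (j+1) t (by omega), off_succ q j (by omega)]
      linear_combination hx
  · have ht8 : t = 8*q := by omega
    have hxval : x = off q j + ((DD q j : ℕ) : ZMod (8*q+1)) - 1 := by
      have : (t : ZMod (8*q+1)) = -1 := by rw [ht8]; exact e8q q
      rw [this] at hx
      linear_combination - hx
    refine ⟨8*q + (2*(2*q+j)+1), q, 8*q + (2*(2*q+j)+2), q, by omega, by omega, by omega, by omega,
      Or.inl ⟨rfl, Or.inl (by omega)⟩, ?_, ?_⟩
    · rw [ww_patch1, PP_tau q j hj, hxval]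
    · rw [ww_patch2, PP_tau q j hj, off_succ q j (by omega), hxval]
      ring


lemma DD_qq (q : ℕ) : DD q q = 4*q := by
  unfold DD
  rw [if_neg (by omega), if_pos rfl]

lemma DD_last (q : ℕ) (hq : 1 ≤ q) : DD q (q-1) = 4*q - 2 := by
  unfold DD
  rw [if_pos (by omega)]

lemma S5 (q : ℕ) (hq : 2 ≤ q) (x : ZMod (8*q+1)) :
    cov q x (x + ((4*q : ℕ) : ZMod (8*q+1))) := by
  set u := (x - off q (q-1)).val with hu
  have hult : u < 8*q+1 := ZMod.val_lt _
  have hx : (u : ZMod (8*q+1)) = x - off q (q-1) := valcast q _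
  by_cases hc : u ≤ 4*q
  · refine ⟨2*u, q-1, 2*u, q, by omega, by omega, by omega, by omega,
      Or.inr ⟨rfl, Or.inl (by omega)⟩, ?_, ?_⟩
    · rw [ww_even q (q-1) u (by omega)]
      linear_combination hx
    · rw [ww_even q q u (by omega), off_last q (by omega)]
      linear_combination hx
  · by_cases hc2 : u < 8*q
    · set t := u - (4*q) with htdef
      have hcast : (t : ZMod (8*q+1)) = (u : ZMod (8*q+1)) - ((4*q : ℕ) : ZMod (8*q+1)) := by
        rw [htdef, Nat.cast_sub (by omega)]
      refine ⟨2*t, q, 2*t+1, q, by omega, by omega, by omega, by omega,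
        Or.inl ⟨rfl, Or.inl rfl⟩, ?_, ?_⟩
      · rw [ww_even q q t (by omega), off_last q (by omega)]
        rw [hcast]
        linear_combination hx
      · rw [ww_odd q q t (by omega), off_last q (by omega), DD_qq q, hcast]
        linear_combination hx
    · have hu8 : u = 8*q := by omega
      have hxval : x = off q (q-1) - 1 := by
        have : (u : ZMod (8*q+1)) = -1 := by rw [hu8]; exact e8q q
        rw [this] at hx
        linear_combination - hx
      refine ⟨8*q + (2*(3*q-1)+1), q, 8*q + (2*(3*q-1)+2), q, by omega, by omega, by omega, by omega,
        Or.inl ⟨rfl, Or.inl (by omega)⟩, ?_, ?_⟩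
      · rw [ww_patch1, PP_seam1 q (by omega), hxval]
      · rw [ww_patch2, PP_seam1 q (by omega), hxval]

lemma S6 (q : ℕ) (hq : 2 ≤ q) (x : ZMod (8*q+1)) :
    cov q x (x + ((4*q : ℕ) : ZMod (8*q+1)) - 1) := by
  set u := (x - off q (q-1) + 1).val with hu
  have hult : u < 8*q+1 := ZMod.val_lt _
  have hx : (u : ZMod (8*q+1)) = x - off q (q-1) + 1 := valcast q _
  by_cases hc : u ≤ 4*q - 1
  · -- horizontal edge rows 2u+1, cols (q, q-1): color x at col q
    refine ⟨2*u+1, q, 2*u+1, q-1, by omega, by omega, by omega, by omega,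
      Or.inr ⟨rfl, Or.inr (by omega)⟩, ?_, ?_⟩
    · rw [ww_odd q q u (by omega), off_last q (by omega), DD_qq q]
      have h8 : ((4*q : ℕ) : ZMod (8*q+1)) + ((4*q : ℕ) : ZMod (8*q+1)) = -1 := by
        have := e8q q
        push_cast at this ⊢
        linear_combination this
      linear_combination hx + h8
    · rw [ww_odd q (q-1) u (by omega), DD_last q (by omega)]
      have hc4 : ((4*q - 2 : ℕ) : ZMod (8*q+1)) = ((4*q : ℕ) : ZMod (8*q+1)) - 2 := by
        rw [Nat.cast_sub (by omega)]
        norm_num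
      rw [hc4]
      linear_combination hx
  · by_cases hc2 : u = 4*q
    · have hxval : x = off q (q-1) + ((4*q-1 : ℕ) : ZMod (8*q+1)) := by
        have h4 : ((4*q-1 : ℕ) : ZMod (8*q+1)) = ((4*q : ℕ) : ZMod (8*q+1)) - 1 := by
          rw [Nat.cast_sub (by omega)]; norm_num
        rw [h4]
        have : (u : ZMod (8*q+1)) = ((4*q:ℕ) : ZMod (8*q+1)) := by rw [hc2]
        rw [this] at hx
        linear_combination - hx
      refine ⟨8*q + (2*(3*q)+1), q, 8*q + (2*(3*q)+2), q, by omega, by omega, by omega, by omega,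
        Or.inl ⟨rfl, Or.inl (by omega)⟩, ?_, ?_⟩
      · rw [ww_patch1, PP_seam2 q (by omega), hxval]
      · rw [ww_patch2, PP_seam2 q (by omega), hxval]
        have h1 : ((8*q-2 : ℕ) : ZMod (8*q+1)) = ((8*q : ℕ) : ZMod (8*q+1)) - 2 := by
          rw [Nat.cast_sub (by omega)]; norm_num
        have h2 : ((4*q-1 : ℕ) : ZMod (8*q+1)) = ((4*q : ℕ) : ZMod (8*q+1)) - 1 := by
          rw [Nat.cast_sub (by omega)]; norm_num
        have h8 : ((4*q : ℕ) : ZMod (8*q+1)) + ((4*q : ℕ) : ZMod (8*q+1)) = -1 := by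
          have := e8q q
          push_cast at this ⊢
          linear_combination this
        rw [h1, h2, e8q q]
        linear_combination - h8
    · by_cases hc3 : u = 4*q+1
      · have hxval : x = off q (q-1) + ((4*q : ℕ) : ZMod (8*q+1)) := by
          have : (u : ZMod (8*q+1)) = ((4*q:ℕ) : ZMod (8*q+1)) + 1 := by rw [hc3]; push_cast; ring
          rw [this] at hx
          linear_combination - hx
        refine ⟨8*q + (2*(3*q+1)+1), q, 8*q + (2*(3*q+1)+2), q, by omega, by omega, by omega, by omega,
          Or.inl ⟨rfl, Or.inl (by omega)⟩, ?_, ?_⟩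
        · rw [ww_patch1, PP_seam3 q (by omega), hxval]
        · rw [ww_patch2, PP_seam3 q (by omega), hxval]
          have h1 : ((8*q-1 : ℕ) : ZMod (8*q+1)) = ((8*q : ℕ) : ZMod (8*q+1)) - 1 := by
            rw [Nat.cast_sub (by omega)]; norm_num
          have h8 : ((4*q : ℕ) : ZMod (8*q+1)) + ((4*q : ℕ) : ZMod (8*q+1)) = -1 := by
            have := e8q q
            push_cast at this ⊢
            linear_combination this
          rw [h1, e8q q]
          linear_combination - h8
      · -- 4q+2 ≤ u ≤ 8q
        set t := u - (4*q+2) with htdef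
        have hcast : (t : ZMod (8*q+1)) = (u : ZMod (8*q+1)) - ((4*q : ℕ) : ZMod (8*q+1)) - 2 := by
          rw [htdef, Nat.cast_sub (by omega)]
          push_cast
          ring
        have h8 : ((4*q : ℕ) : ZMod (8*q+1)) + ((4*q : ℕ) : ZMod (8*q+1)) = -1 := by
          have := e8q q
          push_cast at this ⊢
          linear_combination this
        refine ⟨2*(t+1), q, 2*t+1, q, by omega, by omega, by omega, by omega,
          Or.inl ⟨rfl, Or.inr (by omega)⟩, ?_, ?_⟩
        · rw [ww_even q q (t+1) (by omega), off_last q (by omega)]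
          push_cast at hcast hx ⊢
          linear_combination hcast + hx
        · rw [ww_odd q q t (by omega), off_last q (by omega), DD_qq q]
          push_cast at hcast hx ⊢
          linear_combination hcast + hx


lemma cast_identity (q a b c d' : ℕ) (h : a + b = d' + c) :
    ((a : ℕ) : ZMod (8*q+1)) + ((b : ℕ) : ZMod (8*q+1)) = ((d' : ℕ) : ZMod (8*q+1)) + ((c : ℕ) : ZMod (8*q+1)) := by
  have := congrArg (fun n : ℕ => ((n : ℕ) : ZMod (8*q+1))) h
  push_cast at this
  exact this

lemma cover (q d : ℕ) (hq : 2 ≤ q) (hd1 : 1 ≤ d) (hd2 : d ≤ 4*q) (x : ZMod (8*q+1)) :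
    cov q x (x + ((d : ℕ) : ZMod (8*q+1))) := by
  have hp : q % 2 = 0 ∨ q % 2 = 1 := Nat.mod_two_eq_zero_or_one q
  by_cases h1 : d = 4*q
  · subst h1; exact S5 q hq x
  by_cases h2 : d = 4*q-1
  · have h := S6 q hq x
    have he : ((d : ℕ) : ZMod (8*q+1)) = ((4*q : ℕ) : ZMod (8*q+1)) - 1 := by
      rw [show (4*q : ℕ) = d + 1 by omega]
      push_cast; ring
    rw [he, ← add_sub_assoc]; exact h
  by_cases h3 : d = 4*q-2
  · have hDD : DD q (q-1) = d := by rw [DD_last q (by omega)]; omega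
    have h := S1 q (q-1) (by omega) x
    rwa [hDD] at h
  by_cases h4 : d = 4*q-3
  · have hDD : DD q (q-1) = d + 1 := by rw [DD_last q (by omega)]; omega
    have h := S2 q (q-1) (by omega) x
    rw [hDD] at h
    have he : ((d : ℕ) : ZMod (8*q+1)) = ((d+1 : ℕ) : ZMod (8*q+1)) - 1 := by push_cast; ring
    rw [he, ← add_sub_assoc]; exact h
  by_cases h5 : d = 4*q-4
  · have key : sg q (q-2) + DD q (q-1) = d + DD q (q-2) := by
      unfold sg DD
      split_ifs <;> omega
    have h := S4 q (q-2) (by omega) x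
    have keyc := cast_identity q _ _ _ _ key
    rw [show q - 2 + 1 = q - 1 by omega] at h
    rw [show x + ((d:ℕ) : ZMod (8*q+1)) =
        x + ((sg q (q-2) : ℕ) : ZMod (8*q+1)) + ((DD q (q-1) : ℕ) : ZMod (8*q+1))
          - ((DD q (q-2) : ℕ) : ZMod (8*q+1)) from by linear_combination - keyc]
    exact h
  -- now d ≤ 4q-5
  have hd5 : d ≤ 4*q - 5 := by omega
  by_cases hcu : d % 4 = 3 - q % 2
  · -- column up, j = d/4
    have hDD : DD q (d/4) = d := by
      unfold DD
      split_ifs <;> omega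
    have h := S1 q (d/4) (by omega) x
    rwa [hDD] at h
  by_cases hcd : d % 4 = 2 - q % 2
  · -- column down, j = d/4
    have hDD : DD q (d/4) = d + 1 := by
      unfold DD
      split_ifs <;> omega
    have h := S2 q (d/4) (by omega) x
    rw [hDD] at h
    have he : ((d : ℕ) : ZMod (8*q+1)) = ((d+1 : ℕ) : ZMod (8*q+1)) - 1 := by push_cast; ring
    rw [he, ← add_sub_assoc]; exact h
  by_cases hfl : d % 8 = 1 + 2*(q%2) ∨ d % 8 = 4
  · -- full class, j = d/4
    have hsg : sg q (d/4) = d := by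
      unfold sg
      split_ifs <;> omega
    have h := S3 q (d/4) (by omega) x
    rwa [hsg] at h
  · -- tau, j = d/4 - 1
    have hdd8 : d % 8 = 5 + 2*(q%2) ∨ d % 8 = 0 := by omega
    set j := d/4 - 1 with hjdef
    have hj2 : j + 2 ≤ q := by omega
    have key : sg q j + DD q (j+1) = d + DD q j := by
      unfold sg DD
      split_ifs <;> omega
    have h := S4 q j hj2 x
    have keyc := cast_identity q _ _ _ _ key
    rw [show x + ((d:ℕ) : ZMod (8*q+1)) =
        x + ((sg q j : ℕ) : ZMod (8*q+1)) + ((DD q (j+1) : ℕ) : ZMod (8*q+1))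
          - ((DD q j : ℕ) : ZMod (8*q+1)) from by linear_combination - keyc]
    exact h



lemma cov_to_edge (q : ℕ) (a b : ZMod (8*q+1)) (h : cov q a b) :
    ∃ u v : Fin (16*q+1) × Fin (q+1), (gridGraph (16*q+1) (q+1)).Adj u v ∧
      ww q u.2.val u.1.val = a ∧ ww q v.2.val v.1.val = b := by
  obtain ⟨r₁, j₁, r₂, j₂, hr₁, hr₂, hj₁, hj₂, hrel, hw1, hw2⟩ := h
  refine ⟨(⟨r₁, hr₁⟩, ⟨j₁, hj₁⟩), (⟨r₂, hr₂⟩, ⟨j₂, hj₂⟩), ?_, hw1, hw2⟩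
  rcases hrel with ⟨hj, hr⟩ | ⟨hr, hj⟩
  · exact Or.inr ⟨by simp [hj], by simp; omega⟩
  · exact Or.inl ⟨by simp [hr], by simp; omega⟩

def colF (q : ℕ) (v : Fin (16*q+1) × Fin (q+1)) : Fin (8*q+1) :=
  ⟨(ww q v.2.val v.1.val).val, ZMod.val_lt _⟩

lemma complete (q : ℕ) (hq : 2 ≤ q) :
    IsCompleteColoring (gridGraph (16*q+1) (q+1)) (8*q+1) (colF q) := by
  intro i j hij
  set a : ZMod (8*q+1) := ((i.val : ℕ) : ZMod (8*q+1)) with ha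
  set b : ZMod (8*q+1) := ((j.val : ℕ) : ZMod (8*q+1)) with hb
  have hav : a.val = i.val := ZMod.val_cast_of_lt i.isLt
  have hbv : b.val = j.val := ZMod.val_cast_of_lt j.isLt
  have hab : a ≠ b := by
    intro hcon
    apply hij
    apply Fin.ext
    rw [← hav, ← hbv, hcon]
  set dif := (b - a).val with hdif
  have hdlt : dif < 8*q+1 := ZMod.val_lt _
  have hdpos : 1 ≤ dif := by
    rcases Nat.eq_zero_or_pos dif with h0 | h0
    · exfalso
      have : b - a = 0 := by
        have := (ZMod.val_eq_zero (b-a)).mp h0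
        exact this
      have : b = a := by linear_combination this
      exact hab this.symm
    · exact h0
  have hcast : ((dif : ℕ) : ZMod (8*q+1)) = b - a := valcast q _
  by_cases hle : dif ≤ 4*q
  · have hcov := cover q dif hq hdpos hle a
    rw [hcast, show a + (b - a) = b from by ring] at hcov
    obtain ⟨u, v, hadj, hu, hv⟩ := cov_to_edge q a b hcov
    refine ⟨u, v, hadj, ?_, ?_⟩
    · apply Fin.ext; simp [colF, hu, hav]
    · apply Fin.ext; simp [colF, hv, hbv]
  · set d := 8*q+1 - dif with hd
    have hdcast : ((d : ℕ) : ZMod (8*q+1)) = a - b := by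
      rw [hd, Nat.cast_sub (by omega)]
      rw [ZMod.natCast_self, hcast]
      ring
    have hcov := cover q d hq (by omega) (by omega) b
    rw [hdcast, show b + (a - b) = a from by ring] at hcov
    obtain ⟨u, v, hadj, hu, hv⟩ := cov_to_edge q b a hcov
    refine ⟨v, u, hadj.symm, ?_, ?_⟩
    · apply Fin.ext; simp [colF, hv, hav]
    · apply Fin.ext; simp [colF, hu, hbv]


section Upper

variable {N m : ℕ}

/-- encode an adjacent (ordered) pair of vertices as (edge, orientation) -/
def enc (hm : 3 ≤ m) (hN : 1 ≤ N) (u v : Fin N × Fin m) :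
    ((Fin N × Fin (m-1)) ⊕ (Fin (N-1) × Fin m)) × Bool :=
  if h2 : (u.2 : ℕ) + 1 = v.2 then (Sum.inl (u.1, ⟨u.2, by have := v.2.isLt; omega⟩), false)
  else if h2' : (v.2 : ℕ) + 1 = u.2 then (Sum.inl (u.1, ⟨v.2, by have := u.2.isLt; omega⟩), true)
  else if h1 : (u.1 : ℕ) + 1 = v.1 then (Sum.inr (⟨u.1, by have := v.1.isLt; omega⟩, u.2), false)
  else if h1' : (v.1 : ℕ) + 1 = u.1 then (Sum.inr (⟨v.1, by have := u.1.isLt; omega⟩, u.2), true)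
  else (Sum.inl (⟨0, by omega⟩, ⟨0, by omega⟩), false)

def dec {k : ℕ} (hm : 3 ≤ m) (hN : 1 ≤ N) (c : Fin N × Fin m → Fin k)
    (e : ((Fin N × Fin (m-1)) ⊕ (Fin (N-1) × Fin m)) × Bool) : Fin k × Fin k :=
  match e with
  | (Sum.inl (r, jc), bb) =>
      let u := (r, (⟨jc, by have := jc.isLt; omega⟩ : Fin m))
      let v := (r, (⟨(jc : ℕ) + 1, by have := jc.isLt; omega⟩ : Fin m))
      if bb then (c v, c u) else (c u, c v)
  | (Sum.inr (rc, jj), bb) =>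
      let u := ((⟨rc, by have := rc.isLt; omega⟩ : Fin N), jj)
      let v := ((⟨(rc : ℕ) + 1, by have := rc.isLt; omega⟩ : Fin N), jj)
      if bb then (c v, c u) else (c u, c v)

lemma dec_enc {k : ℕ} (hm : 3 ≤ m) (hN : 1 ≤ N) (c : Fin N × Fin m → Fin k)
    (u v : Fin N × Fin m) (hadj : (gridGraph N m).Adj u v) :
    dec hm hN c (enc hm hN u v) = (c u, c v) := by
  rcases hadj with ⟨h1, h2 | h2⟩ | ⟨h1, h2 | h2⟩
  · rw [enc, dif_pos h2]
    have hu : ((u.1, (⟨(u.2 : ℕ), by have := v.2.isLt; omega⟩ : Fin m)) : Fin N × Fin m) = u := by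
      ext <;> simp
    have hv : ((u.1, (⟨(u.2 : ℕ) + 1, by have := v.2.isLt; omega⟩ : Fin m)) : Fin N × Fin m) = v := by
      ext
      · simp [h1]
      · simp [h2]
    simp only [dec, if_neg Bool.false_ne_true]
    exact congrArg₂ Prod.mk (congrArg c hu) (congrArg c hv)
  · rw [enc, dif_neg (by omega), dif_pos h2]
    have hu : ((u.1, (⟨(v.2 : ℕ), by have := u.2.isLt; omega⟩ : Fin m)) : Fin N × Fin m) = v := by
      ext <;> simp [h1]
    have hv : ((u.1, (⟨(v.2 : ℕ) + 1, by have := u.2.isLt; omega⟩ : Fin m)) : Fin N × Fin m) = u := by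
      ext
      · simp
      · simp [h2]
    simp only [dec, if_pos rfl]
    exact congrArg₂ Prod.mk (congrArg c hv) (congrArg c hu)
  · rw [enc, dif_neg (by omega), dif_neg (by omega), dif_pos h2]
    have hu : (((⟨(u.1 : ℕ), by have := v.1.isLt; omega⟩ : Fin N), u.2) : Fin N × Fin m) = u := by
      ext <;> simp
    have hv : (((⟨(u.1 : ℕ) + 1, by have := v.1.isLt; omega⟩ : Fin N), u.2) : Fin N × Fin m) = v := by
      ext
      · simp [h2]
      · simp [h1]
    simp only [dec, if_neg Bool.false_ne_true]
    exact congrArg₂ Prod.mk (congrArg c hu) (congrArg c hv)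
  · rw [enc, dif_neg (by omega), dif_neg (by omega), dif_neg (by omega), dif_pos h2]
    have hu : (((⟨(v.1 : ℕ), by have := u.1.isLt; omega⟩ : Fin N), u.2) : Fin N × Fin m) = v := by
      ext
      · simp
      · simp [h1]
    have hv : (((⟨(v.1 : ℕ) + 1, by have := u.1.isLt; omega⟩ : Fin N), u.2) : Fin N × Fin m) = u := by
      ext
      · simp [h2]
      · simp
    simp only [dec, if_pos rfl]
    exact congrArg₂ Prod.mk (congrArg c hv) (congrArg c hu)

lemma upper_core (N m k : ℕ) (hm : 3 ≤ m) (hN : N = 16*(m-1)+1)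
    (c : Fin N × Fin m → Fin k) (hc : IsCompleteColoring (gridGraph N m) k c) :
    k ≤ 8*m - 6 := by
  by_contra hk
  push_neg at hk
  have hk' : 8*m - 5 ≤ k := by omega
  have hN1 : 1 ≤ N := by omega
  choose uF vF hadj hcu hcv using hc
  set T := ((Fin N × Fin (m-1)) ⊕ (Fin (N-1) × Fin m)) × Bool with hT
  have hjunk : T := (Sum.inl (⟨0, by omega⟩, ⟨0, by omega⟩), false)
  set F : Fin k × Fin k → T :=
    fun p => if h : p.1 ≠ p.2 then enc hm hN1 (uF p.1 p.2 h) (vF p.1 p.2 h) else hjunk with hF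
  have hrec : ∀ p : Fin k × Fin k, p.1 ≠ p.2 → dec hm hN1 c (F p) = p := by
    intro p hp
    rw [hF]
    simp only [dif_pos hp]
    rw [dec_enc hm hN1 c _ _ (hadj p.1 p.2 hp), hcu p.1 p.2 hp, hcv p.1 p.2 hp]
  have hinj : Set.InjOn F ((Finset.univ : Finset (Fin k)).offDiag : Set (Fin k × Fin k)) := by
    intro p hp p' hp' heq
    simp only [Finset.coe_offDiag, Set.mem_setOf_eq] at hp hp'
    have h1 := hrec p (by exact hp.2.2)
    have h2 := hrec p' (by exact hp'.2.2)
    rw [← h1, ← h2, heq]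
  have hcard := Finset.card_le_card_of_injOn F (fun x _ => Finset.mem_univ (F x)) hinj
  rw [Finset.offDiag_card, Finset.card_univ, Fintype.card_fin, Finset.card_univ] at hcard
  have hTcard : Fintype.card T = (N*(m-1) + (N-1)*m) * 2 := by
    simp [hT, Fintype.card_sum, Fintype.card_prod]
  rw [hTcard] at hcard
  -- now: k*k - k ≤ (N*(m-1) + (N-1)*m)*2, k ≥ 8m-5, N = 16(m-1)+1, m ≥ 3: contradiction
  obtain ⟨M, rfl⟩ : ∃ M, m = M + 3 := ⟨m - 3, by omega⟩
  have e1 : M + 3 - 1 = M + 2 := by omega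
  have e2 : N - 1 = 16*M + 32 := by omega
  have e3 : N = 16*M + 33 := by omega
  rw [e1, e2, e3] at hcard
  have hk2 : 8*M + 19 ≤ k := by omega
  have hkk : k ≤ k * k := Nat.le_mul_of_pos_left k (by omega)
  zify [hkk] at hcard
  zify at hk2
  nlinarith [hcard, hk2, mul_nonneg (sub_nonneg.mpr hk2) (sub_nonneg.mpr hk2),
    mul_le_mul_of_nonneg_right hk2 (show (0:ℤ) ≤ (k:ℤ) - 1 by nlinarith [hk2])]

end Upper


end MRR

/-- For `m ≥ 3` and `N̄ = 16(m−1)+1`, the Modified Roichman Rectangle (the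
`N̄×m` grid) satisfies `8m − 7 ≤ Γ(R̄_m) ≤ 8m − 6`. -/
theorem gamma_modified_roichman_rectangle (m : ℕ) (hm : 3 ≤ m) (N : ℕ)
    (hN : N = 16 * (m - 1) + 1) :
    8 * m - 7 ≤ completeColoringNumber (gridGraph N m) ∧
    completeColoringNumber (gridGraph N m) ≤ 8 * m - 6 := by
  obtain ⟨q, rfl⟩ : ∃ q, m = q + 1 := ⟨m - 1, by omega⟩
  have hq : 2 ≤ q := by omega
  have hN' : N = 16 * q + 1 := by omega
  subst hN'
  have hk1 : 8 * (q + 1) - 7 = 8 * q + 1 := by omega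
  set S := {k | ∃ c : Fin (16*q+1) × Fin (q+1) → Fin k,
    IsCompleteColoring (gridGraph (16*q+1) (q+1)) k c} with hS
  have hmem : 8 * q + 1 ∈ S := ⟨MRR.colF q, MRR.complete q hq⟩
  have hbdd : ∀ k ∈ S, k ≤ 8 * (q+1) - 6 := by
    intro k hk
    obtain ⟨c, hc⟩ := hk
    exact MRR.upper_core (16*q+1) (q+1) k (by omega) (by omega) c hc
  constructor
  · rw [hk1]
    exact le_csSup ⟨8 * (q+1) - 6, fun k hk => hbdd k hk⟩ hmem
  · exact csSup_le ⟨8 * q + 1, hmem⟩ hbdd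
end

section
/- For every integer k ≥ 2, there exists a coloring of the 2-Ribbon L_{k+3} (the 2×(k+3) rectangular grid graph) with colors in {1,…,k+3} that realizes every pair of colors in ({1,…,k}×{k+1,k+2,k+3}) ∪ {(k+1,k+2),(k+1,k+3),(k+2,k+3)}; that is, for each such pair (a,b) there is an edge {u,v} of L_{k+3} with c(u)=a and c(v)=b. -/
def ribCol (k i j : ℕ) : ℕ :=
  if (i + j) % 2 = 0 then k + j % 3
  else if j = 0 then k + 2
  else if j ≤ k then j - 1
  else if j = k + 1 then k
  else 0

lemma ribCol_lt (k i j : ℕ) : ribCol k i j < k + 3 := by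
  unfold ribCol; split_ifs <;> first | exact (False.elim ‹False›) | omega

lemma special_neighbor (k j₀ t : ℕ) (h1 : 1 ≤ j₀) (h2 : j₀ ≤ k + 1) (ht : t < 3) :
    ∃ (i₁ : Fin 2) (j₁ : Fin (k + 3)),
      (gridGraph 2 (k + 3)).Adj (⟨(j₀ + 1) % 2, by omega⟩, ⟨j₀, by omega⟩) (i₁, j₁) ∧
      ((i₁ : ℕ) + (j₁ : ℕ)) % 2 = 0 ∧ (j₁ : ℕ) % 3 = t := by
  set o := (t + 3 - (j₀ - 1) % 3) % 3 with ho
  have ho3 : o < 3 := Nat.mod_lt _ (by omega)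
  have hmod : (j₀ - 1 + o) % 3 = t := by omega
  by_cases hc : j₀ - 1 + o = j₀
  · refine ⟨⟨j₀ % 2, by omega⟩, ⟨j₀, by omega⟩, ?_, by simp only [Fin.val_mk]; omega,
      by simp only [Fin.val_mk]; omega⟩
    refine Or.inr ⟨rfl, ?_⟩
    simp only [Fin.val_mk]
    omega
  · refine ⟨⟨(j₀ + 1) % 2, by omega⟩, ⟨j₀ - 1 + o, by omega⟩, ?_,
      by simp only [Fin.val_mk]; omega, by simp only [Fin.val_mk]; omega⟩
    refine Or.inl ⟨rfl, ?_⟩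
    simp only [Fin.val_mk]
    omega

/-- For every `k ≥ 2` there is a coloring of the 2-Ribbon `L_{k+3}` (the
`2×(k+3)` grid) with colors `{1, …, k+3}` (here `Fin (k+3)`, the first `k`
values playing the role of `{1,…,k}` and the last three that of
`{k+1, k+2, k+3}`) realizing every pair in
`{1,…,k} × {k+1,k+2,k+3}` together with the three pairs among
`{k+1, k+2, k+3}`. -/
theorem ribbon_coloring (k : ℕ) (hk : 2 ≤ k) :
    ∃ c : Fin 2 × Fin (k + 3) → Fin (k + 3),
      ∀ a b : Fin (k + 3),
        ((a : ℕ) < k ∧ k ≤ (b : ℕ)) ∨ (k ≤ (a : ℕ) ∧ k ≤ (b : ℕ) ∧ (a : ℕ) < (b : ℕ)) →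
        ∃ u v, (gridGraph 2 (k + 3)).Adj u v ∧ c u = a ∧ c v = b := by
  refine ⟨fun p => ⟨ribCol k p.1 p.2, ribCol_lt k _ _⟩, ?_⟩
  intro a b hab
  have hb3 : (b : ℕ) < k + 3 := b.isLt
  have ha3 : (a : ℕ) < k + 3 := a.isLt
  rcases hab with ⟨ha, hb⟩ | ⟨ha, hb, hab⟩
  · obtain ⟨i₁, j₁, hadj, hpar, hmod⟩ :=
      special_neighbor k ((a : ℕ) + 1) ((b : ℕ) - k) (by omega) (by omega) (by omega)
    refine ⟨_, _, hadj, ?_, ?_⟩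
    · apply Fin.ext
      show ribCol k (((a : ℕ) + 1 + 1) % 2) ((a : ℕ) + 1) = (a : ℕ)
      unfold ribCol; split_ifs <;> first | exact (False.elim ‹False›) | omega
    · apply Fin.ext
      show ribCol k i₁ j₁ = (b : ℕ)
      unfold ribCol; split_ifs <;> first | exact (False.elim ‹False›) | omega
  · have hcase : ((a : ℕ) = k ∧ (b : ℕ) = k + 1) ∨ ((a : ℕ) = k ∧ (b : ℕ) = k + 2) ∨
        ((a : ℕ) = k + 1 ∧ (b : ℕ) = k + 2) := by omega
    rcases hcase with ⟨ha', hb'⟩ | ⟨ha', hb'⟩ | ⟨ha', hb'⟩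
    · obtain ⟨i₁, j₁, hadj, hpar, hmod⟩ :=
        special_neighbor k (k + 1) 1 (by omega) (by omega) (by omega)
      refine ⟨_, _, hadj, ?_, ?_⟩
      · apply Fin.ext
        show ribCol k ((k + 1 + 1) % 2) (k + 1) = (a : ℕ)
        unfold ribCol; split_ifs <;> first | exact (False.elim ‹False›) | omega
      · apply Fin.ext
        show ribCol k i₁ j₁ = (b : ℕ)
        unfold ribCol; split_ifs <;> first | exact (False.elim ‹False›) | omega
    · refine ⟨(⟨0, by omega⟩, ⟨0, by omega⟩), (⟨1, by omega⟩, ⟨0, by omega⟩),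
        Or.inr ⟨rfl, Or.inl rfl⟩, ?_, ?_⟩
      · apply Fin.ext
        show ribCol k 0 0 = (a : ℕ)
        unfold ribCol; split_ifs <;> first | exact (False.elim ‹False›) | omega
      · apply Fin.ext
        show ribCol k 1 0 = (b : ℕ)
        unfold ribCol; split_ifs <;> first | exact (False.elim ‹False›) | omega
    · refine ⟨(⟨1, by omega⟩, ⟨1, by omega⟩), (⟨1, by omega⟩, ⟨0, by omega⟩),
        Or.inl ⟨rfl, Or.inr rfl⟩, ?_, ?_⟩
      · apply Fin.ext
        simp only [Fin.val_mk]
        unfold ribCol; split_ifs <;> first | exact (False.elim ‹False›) | omega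
      · apply Fin.ext
        show ribCol k 1 0 = (b : ℕ)
        unfold ribCol; split_ifs <;> first | exact (False.elim ‹False›) | omega
end

section
/- Copy and Paste Lemma: let R₁ and R₂ be rectangular grid graphs of dimensions m₁×n₁ and m₂×n₂ respectively, let A be a set of pairs of colors from {1,…,k₀}, and let c₁ be a partial coloring of R₁ (a function assigning colors in {1,…,k₀} to some subset of the vertices of R₁) that realizes every pair in A. If there exists a positive integer k with k·m₁ ≤ m₂ and n₁ + (k−1) ≤ k·n₂, then there exists a partial coloring c₂ of R₂ with colors in {1,…,k₀} that also realizes every pair in A. -/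
/-- A partial coloring (a coloring of some subset of the vertices, encoded via
`Option`) realizes the pair of colors `(a, b)` if some edge joins a vertex
colored `a` to a vertex colored `b`. -/
def PartialRealizes {V : Type*} {k₀ : ℕ} (G : SimpleGraph V) (c : V → Option (Fin k₀))
    (a b : Fin k₀) : Prop :=
  ∃ u v, G.Adj u v ∧ c u = some a ∧ c v = some b

def pasteColor (m₁ n₁ n₂ k₀ : ℕ) (c₁ : Fin m₁ × Fin n₁ → Option (Fin k₀)) (x y : ℕ) :
    Option (Fin k₀) :=
  if h : x % m₁ < m₁ ∧
      (x / m₁) * (n₂ - 1) + (if (x / m₁) % 2 = 0 then y else (n₂ - 1) - y) < n₁ then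
    c₁ (⟨x % m₁, h.1⟩, ⟨_, h.2⟩)
  else none

lemma pasteColor_eq (m₁ n₁ n₂ k₀ : ℕ) (c₁ : Fin m₁ × Fin n₁ → Option (Fin k₀))
    (t r i : ℕ) (hi : i < m₁) (hj : t * (n₂ - 1) + r < n₁) (hr : r ≤ n₂ - 1) :
    pasteColor m₁ n₁ n₂ k₀ c₁ (m₁ * t + i) (if t % 2 = 0 then r else (n₂ - 1) - r) =
      c₁ (⟨i, hi⟩, ⟨t * (n₂ - 1) + r, hj⟩) := by
  have hm : 0 < m₁ := by omega
  have e1 : (m₁ * t + i) % m₁ = i := by rw [Nat.mul_add_mod]; exact Nat.mod_eq_of_lt hi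
  have e2 : (m₁ * t + i) / m₁ = t := by
    rw [Nat.mul_add_div hm, Nat.div_eq_of_lt hi]; omega
  have e3 : (if t % 2 = 0 then (if t % 2 = 0 then r else (n₂ - 1) - r)
      else (n₂ - 1) - (if t % 2 = 0 then r else (n₂ - 1) - r)) = r := by
    by_cases h : t % 2 = 0 <;> simp [h]; omega
  unfold pasteColor
  simp only [e1, e2, e3]
  rw [dif_pos ⟨hi, hj⟩]

/-- Copy and Paste Lemma: if a partial coloring of the `m₁×n₁` grid realizes all
color pairs in `A`, and there is a positive integer `k` with `k·m₁ ≤ m₂` and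
`n₁ + (k−1) ≤ k·n₂`, then there is a partial coloring of the `m₂×n₂` grid that
also realizes all pairs in `A`. -/
theorem copy_and_paste (m₁ n₁ m₂ n₂ k₀ : ℕ) (A : Set (Fin k₀ × Fin k₀))
    (c₁ : Fin m₁ × Fin n₁ → Option (Fin k₀))
    (h₁ : ∀ p ∈ A, PartialRealizes (gridGraph m₁ n₁) c₁ p.1 p.2)
    (k : ℕ) (hk : 0 < k) (hm : k * m₁ ≤ m₂) (hn : n₁ + (k - 1) ≤ k * n₂) :
    ∃ c₂ : Fin m₂ × Fin n₂ → Option (Fin k₀),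
      ∀ p ∈ A, PartialRealizes (gridGraph m₂ n₂) c₂ p.1 p.2 := by
  refine ⟨fun q => pasteColor m₁ n₁ n₂ k₀ c₁ q.1 q.2, ?_⟩
  rintro ⟨a, b⟩ hp
  obtain ⟨⟨⟨ui, hui⟩, ⟨uj, huj⟩⟩, ⟨⟨vi, hvi⟩, ⟨vj, hvj⟩⟩, huv, hcu, hcv⟩ := h₁ _ hp
  have hm₁ : 0 < m₁ := by omega
  have hn₁ : 0 < n₁ := by omega
  have hn₂ : 0 < n₂ := by
    rcases Nat.eq_zero_or_pos n₂ with h | h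
    · rw [h, Nat.mul_zero] at hn; omega
    · exact h
  have hkw : n₁ ≤ k * (n₂ - 1) + 1 := by
    have h2 : k * n₂ = k * (n₂ - 1) + k := by
      obtain ⟨w, rfl⟩ : ∃ w, n₂ = w + 1 := ⟨n₂ - 1, by omega⟩
      simp [Nat.mul_add]
    omega
  have hrow : ∀ t i, t + 1 ≤ k → i < m₁ → m₁ * t + i < m₂ := by
    intro t i ht hi
    have h1 : m₁ * (t + 1) ≤ m₁ * k := Nat.mul_le_mul_left _ ht
    have h2 : m₁ * k = k * m₁ := Nat.mul_comm _ _
    have h3 : m₁ * (t + 1) = m₁ * t + m₁ := by ring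
    omega
  -- strip finder for a single column (used for vertical edges)
  have strip : ∀ j, j < n₁ → ∃ t r, t + 1 ≤ k ∧ r ≤ n₂ - 1 ∧ j = t * (n₂ - 1) + r := by
    intro j hj
    rcases Nat.eq_zero_or_pos (n₂ - 1) with hw0 | hw0
    · refine ⟨0, 0, by omega, by omega, ?_⟩
      rw [hw0] at hkw
      omega
    · rcases Nat.lt_or_ge (j / (n₂ - 1)) k with h | h
      · refine ⟨j / (n₂ - 1), j % (n₂ - 1), h, Nat.le_of_lt (Nat.mod_lt _ hw0), ?_⟩
        rw [Nat.mul_comm]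
        exact (Nat.div_add_mod j (n₂ - 1)).symm
      · have hge : k * (n₂ - 1) ≤ j := by
          calc k * (n₂ - 1) ≤ j / (n₂ - 1) * (n₂ - 1) := Nat.mul_le_mul_right _ h
          _ ≤ j := Nat.div_mul_le_self j _
        have hje : j = k * (n₂ - 1) := by omega
        refine ⟨k - 1, n₂ - 1, by omega, le_refl _, ?_⟩
        have : (k - 1) * (n₂ - 1) + (n₂ - 1) = k * (n₂ - 1) := by
          have hk1 : k = (k - 1) + 1 := by omega
          calc (k - 1) * (n₂ - 1) + (n₂ - 1) = ((k - 1) + 1) * (n₂ - 1) := by ring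
          _ = k * (n₂ - 1) := by rw [← hk1]
        omega
  -- strip finder for a horizontal edge (both columns j, j+1 in the strip)
  have strip2 : ∀ j, j + 1 < n₁ → ∃ t r, t + 1 ≤ k ∧ r + 1 ≤ n₂ - 1 ∧ j = t * (n₂ - 1) + r := by
    intro j hj
    have hw1 : 1 ≤ n₂ - 1 := by
      rcases Nat.eq_zero_or_pos (n₂ - 1) with hw0 | hw0
      · rw [hw0, Nat.mul_zero] at hkw; omega
      · exact hw0
    have ht : j / (n₂ - 1) < k := by
      rw [Nat.div_lt_iff_lt_mul hw1]
      have : k * (n₂ - 1) = (n₂ - 1) * k := Nat.mul_comm _ _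
      omega
    refine ⟨j / (n₂ - 1), j % (n₂ - 1), ht, Nat.mod_lt _ hw1, ?_⟩
    rw [Nat.mul_comm]
    exact (Nat.div_add_mod j (n₂ - 1)).symm
  rcases huv with ⟨h1, h2⟩ | ⟨h1, h2⟩
  · -- same row coordinate, columns adjacent
    simp only [Fin.mk.injEq] at h1
    simp only [Fin.val_mk] at h2  -- hopefully h2 : uj + 1 = vj ∨ vj + 1 = uj
    subst h1
    rcases h2 with h2 | h2
    · -- vj = uj + 1
      obtain ⟨t, r, ht, hr, hjr⟩ := strip2 uj (by omega)
      have hj1 : t * (n₂ - 1) + r < n₁ := by omega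
      have hj2 : t * (n₂ - 1) + (r + 1) < n₁ := by omega
      refine ⟨(⟨m₁ * t + ui, hrow t ui ht hui⟩, ⟨if t % 2 = 0 then r else (n₂ - 1) - r, by
        by_cases h : t % 2 = 0 <;> simp [h] <;> omega⟩),
        (⟨m₁ * t + ui, hrow t ui ht hui⟩, ⟨if t % 2 = 0 then r + 1 else (n₂ - 1) - (r + 1), by
        by_cases h : t % 2 = 0 <;> simp [h] <;> omega⟩), ?_, ?_, ?_⟩
      · exact Or.inl ⟨rfl, by by_cases h : t % 2 = 0 <;> simp [h] <;> omega⟩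
      · beta_reduce
        rw [pasteColor_eq m₁ n₁ n₂ k₀ c₁ t r ui hui hj1 (by omega)]
        have : uj = t * (n₂ - 1) + r := hjr
        rw [show c₁ (⟨ui, hui⟩, ⟨t * (n₂ - 1) + r, hj1⟩) = c₁ (⟨ui, hui⟩, ⟨uj, huj⟩) from by
          congr 1; simp only [Prod.mk.injEq, Fin.mk.injEq, true_and, and_true]; omega]
        exact hcu
      · beta_reduce
        rw [pasteColor_eq m₁ n₁ n₂ k₀ c₁ t (r + 1) ui hui hj2 (by omega)]
        rw [show c₁ (⟨ui, hui⟩, ⟨t * (n₂ - 1) + (r + 1), hj2⟩) = c₁ (⟨ui, hui⟩, ⟨vj, hvj⟩) from by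
          congr 1; simp only [Prod.mk.injEq, Fin.mk.injEq, true_and, and_true]; omega]
        exact hcv
    · -- uj = vj + 1
      obtain ⟨t, r, ht, hr, hjr⟩ := strip2 vj (by omega)
      have hj1 : t * (n₂ - 1) + r < n₁ := by omega
      have hj2 : t * (n₂ - 1) + (r + 1) < n₁ := by omega
      refine ⟨(⟨m₁ * t + ui, hrow t ui ht hui⟩, ⟨if t % 2 = 0 then r + 1 else (n₂ - 1) - (r + 1), by
        by_cases h : t % 2 = 0 <;> simp [h] <;> omega⟩),
        (⟨m₁ * t + ui, hrow t ui ht hui⟩, ⟨if t % 2 = 0 then r else (n₂ - 1) - r, by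
        by_cases h : t % 2 = 0 <;> simp [h] <;> omega⟩), ?_, ?_, ?_⟩
      · exact Or.inl ⟨rfl, by by_cases h : t % 2 = 0 <;> simp [h] <;> omega⟩
      · beta_reduce
        rw [pasteColor_eq m₁ n₁ n₂ k₀ c₁ t (r + 1) ui hui hj2 (by omega)]
        rw [show c₁ (⟨ui, hui⟩, ⟨t * (n₂ - 1) + (r + 1), hj2⟩) = c₁ (⟨ui, hui⟩, ⟨uj, huj⟩) from by
          congr 1; simp only [Prod.mk.injEq, Fin.mk.injEq, true_and, and_true]; omega]
        exact hcu
      · beta_reduce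
        rw [pasteColor_eq m₁ n₁ n₂ k₀ c₁ t r ui hui hj1 (by omega)]
        rw [show c₁ (⟨ui, hui⟩, ⟨t * (n₂ - 1) + r, hj1⟩) = c₁ (⟨ui, hui⟩, ⟨vj, hvj⟩) from by
          congr 1; simp only [Prod.mk.injEq, Fin.mk.injEq, true_and, and_true]; omega]
        exact hcv
  · -- same column coordinate, rows adjacent
    simp only [Fin.mk.injEq] at h1
    simp only [Fin.val_mk] at h2
    subst h1
    obtain ⟨t, r, ht, hr, hjr⟩ := strip uj huj
    have hj1 : t * (n₂ - 1) + r < n₁ := by omega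
    have hcol : (if t % 2 = 0 then r else (n₂ - 1) - r) < n₂ := by
      by_cases h : t % 2 = 0 <;> simp [h] <;> omega
    rcases h2 with h2 | h2
    · -- vi = ui + 1
      refine ⟨(⟨m₁ * t + ui, hrow t ui ht hui⟩, ⟨if t % 2 = 0 then r else (n₂ - 1) - r, hcol⟩),
        (⟨m₁ * t + vi, hrow t vi ht hvi⟩, ⟨if t % 2 = 0 then r else (n₂ - 1) - r, hcol⟩),
        ?_, ?_, ?_⟩
      · exact Or.inr ⟨rfl, Or.inl (by simp; omega)⟩
      · beta_reduce
        rw [pasteColor_eq m₁ n₁ n₂ k₀ c₁ t r ui hui hj1 hr]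
        rw [show c₁ (⟨ui, hui⟩, ⟨t * (n₂ - 1) + r, hj1⟩) = c₁ (⟨ui, hui⟩, ⟨uj, huj⟩) from by
          congr 1; simp only [Prod.mk.injEq, Fin.mk.injEq, true_and, and_true]; omega]
        exact hcu
      · beta_reduce
        rw [pasteColor_eq m₁ n₁ n₂ k₀ c₁ t r vi hvi hj1 hr]
        rw [show c₁ (⟨vi, hvi⟩, ⟨t * (n₂ - 1) + r, hj1⟩) = c₁ (⟨vi, hvi⟩, ⟨uj, hvj⟩) from by
          congr 1; simp only [Prod.mk.injEq, Fin.mk.injEq, true_and, and_true]; omega]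
        exact hcv
    · -- ui = vi + 1
      refine ⟨(⟨m₁ * t + ui, hrow t ui ht hui⟩, ⟨if t % 2 = 0 then r else (n₂ - 1) - r, hcol⟩),
        (⟨m₁ * t + vi, hrow t vi ht hvi⟩, ⟨if t % 2 = 0 then r else (n₂ - 1) - r, hcol⟩),
        ?_, ?_, ?_⟩
      · exact Or.inr ⟨rfl, Or.inr (by simp; omega)⟩
      · beta_reduce
        rw [pasteColor_eq m₁ n₁ n₂ k₀ c₁ t r ui hui hj1 hr]
        rw [show c₁ (⟨ui, hui⟩, ⟨t * (n₂ - 1) + r, hj1⟩) = c₁ (⟨ui, hui⟩, ⟨uj, huj⟩) from by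
          congr 1; simp only [Prod.mk.injEq, Fin.mk.injEq, true_and, and_true]; omega]
        exact hcu
      · beta_reduce
        rw [pasteColor_eq m₁ n₁ n₂ k₀ c₁ t r vi hvi hj1 hr]
        rw [show c₁ (⟨vi, hvi⟩, ⟨t * (n₂ - 1) + r, hj1⟩) = c₁ (⟨vi, hvi⟩, ⟨uj, hvj⟩) from by
          congr 1; simp only [Prod.mk.injEq, Fin.mk.injEq, true_and, and_true]; omega]
        exact hcv
end
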